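/- arXiv:1707.06845 — 3 statements merged into one kernel-verified Lean document; each statement's English description precedes it below -/
import Mathlib

section
/- If the distortion function D is convex, then there exists a measure ν on the Borel sets of [0,1) such that for every X ∈ 𝓛_Q, ϱ_Q[X] = ∫_{[0,1)} (1−α)·ES_α[X] dν(α), where (1−α)·ES_α[X] = ∫_{(α,1)} F^←_X(u) dλ(u). -/
open MeasureTheory

/-- The distribution function `F_X(x) = P[X ≤ x]` of a random variable `X`. -/
noncomputable def distFun {Ω : Type*} [MeasurableSpace Ω] (P : Measure Ω) (X : Ω → ℝ) (x : ℝ) : ℝ :=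
  (P {ω | X ω ≤ x}).toReal

/-- The (lower) quantile function `F^←_X(u) = inf {x | F_X(x) ≥ u}`. -/
noncomputable def quantile {Ω : Type*} [MeasurableSpace Ω] (P : Measure Ω) (X : Ω → ℝ) (u : ℝ) : ℝ :=
  sInf {x : ℝ | u ≤ distFun P X x}

/-- A distortion function: an increasing, right-continuous `D : [0,1] → [0,1]`
with `D 0 = 0` and `sup_{u ∈ (0,1)} D u = 1`. -/
structure IsDistortion (D : ℝ → ℝ) : Prop where
  mapsTo : ∀ u ∈ Set.Icc (0:ℝ) 1, D u ∈ Set.Icc (0:ℝ) 1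
  mono : ∀ ⦃a b : ℝ⦄, 0 ≤ a → a ≤ b → b ≤ 1 → D a ≤ D b
  rightCont : ∀ u ∈ Set.Ico (0:ℝ) 1, ContinuousWithinAt D (Set.Icc u 1) u
  zero : D 0 = 0
  sup_one : sSup (D '' Set.Ioo 0 1) = 1

/-- `Q` is the probability measure on the Borel sets of `(0,1)` corresponding to
the distortion function `D`, i.e. `Q (a,b] = D b - D a` for `0 < a ≤ b < 1`. -/
def IsCorresponding (D : ℝ → ℝ) (Q : Measure ℝ) : Prop :=
  IsProbabilityMeasure Q ∧ Q (Set.Ioo (0:ℝ) 1) = 1 ∧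
    ∀ a b : ℝ, 0 < a → a ≤ b → b < 1 → Q (Set.Ioc a b) = ENNReal.ofReal (D b - D a)

/-- `X ∈ 𝓛_Q`, i.e. `∫_{(0,1)} (F^←_X(u))⁺ dQ(u) < ∞`. -/
def memLQ {Ω : Type*} [MeasurableSpace Ω] (P : Measure Ω) (Q : Measure ℝ) (X : Ω → ℝ) : Prop :=
  ∫⁻ u in Set.Ioo (0:ℝ) 1, ENNReal.ofReal (max (quantile P X u) 0) ∂Q < ⊤

/-- The quantile risk measure
`ϱ_Q[X] = ∫_{(0,1)} (F^←_X(u))⁺ dQ(u) - ∫_{(0,1)} (F^←_X(u))⁻ dQ(u)`, with values in `EReal`. -/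
noncomputable def rho {Ω : Type*} [MeasurableSpace Ω] (P : Measure Ω) (Q : Measure ℝ)
    (X : Ω → ℝ) : EReal :=
  ((∫⁻ u in Set.Ioo (0:ℝ) 1, ENNReal.ofReal (max (quantile P X u) 0) ∂Q) : EReal)
    - ((∫⁻ u in Set.Ioo (0:ℝ) 1, ENNReal.ofReal (max (-(quantile P X u)) 0) ∂Q) : EReal)

/-- The expected shortfall at level `α`:
`ES_α[X] = (1/(1-α)) ∫_{(α,1)} F^←_X(u) dλ(u)`, with values in `EReal`. -/
noncomputable def ES {Ω : Type*} [MeasurableSpace Ω] (P : Measure Ω) (α : ℝ) (X : Ω → ℝ) : EReal :=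
  ((1 / (1 - α) : ℝ) : EReal) *
    (((∫⁻ u in Set.Ioo α 1, ENNReal.ofReal (max (quantile P X u) 0)) : EReal)
      - ((∫⁻ u in Set.Ioo α 1, ENNReal.ofReal (max (-(quantile P X u)) 0)) : EReal))

open Set MeasureTheory Filter Topology
open scoped ENNReal

namespace KusuokaAux

variable {D : ℝ → ℝ}

/-- The right derivative candidate of `D` at `x ∈ [0,1)`. -/
noncomputable def phi (D : ℝ → ℝ) (x : ℝ) : ℝ := sInf (slope D x '' Set.Ioo x 1)

section
variable (hD : ∀ ⦃a b : ℝ⦄, 0 ≤ a → a ≤ b → b ≤ 1 → D a ≤ D b)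
  (hconv : ConvexOn ℝ (Set.Icc (0:ℝ) 1) D)
include hD

lemma slope_nonneg {x y : ℝ} (hx : 0 ≤ x) (hxy : x < y) (hy : y ≤ 1) : 0 ≤ slope D x y := by
  rw [slope_def_field]
  exact div_nonneg (sub_nonneg.2 (hD hx hxy.le hy)) (sub_nonneg.2 hxy.le)

lemma bddBelow_slopes {x : ℝ} (hx : 0 ≤ x) : BddBelow (slope D x '' Set.Ioo x 1) := by
  refine ⟨0, ?_⟩
  rintro - ⟨y, hy, rfl⟩
  exact slope_nonneg hD hx hy.1 hy.2.le

lemma phi_le_slope {x y : ℝ} (hx : 0 ≤ x) (hy : y ∈ Set.Ioo x 1) :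
    phi D x ≤ slope D x y :=
  csInf_le (bddBelow_slopes hD hx) (mem_image_of_mem _ hy)

lemma phi_nonneg {x : ℝ} (hx : x ∈ Set.Ico (0:ℝ) 1) : 0 ≤ phi D x := by
  refine le_csInf (((nonempty_Ioo.2 hx.2)).image _) ?_
  rintro - ⟨y, hy, rfl⟩
  exact slope_nonneg hD hx.1 hy.1 hy.2.le

include hconv

lemma slope_mono_right {x y z : ℝ} (hx : 0 ≤ x) (hy : y ∈ Set.Ioo x 1) (hz : z ∈ Set.Ioo x 1)
    (hyz : y ≤ z) : slope D x y ≤ slope D x z := by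
  rw [slope_def_field, slope_def_field]
  exact hconv.secant_mono ⟨hx, (hy.1.trans hy.2).le⟩
    ⟨(hx.trans hy.1.le), hy.2.le⟩ ⟨hx.trans hz.1.le, hz.2.le⟩ hy.1.ne' hz.1.ne' hyz

lemma slope_mono_left {x₁ x₂ y : ℝ} (hx₁ : 0 ≤ x₁) (hx₁₂ : x₁ ≤ x₂) (hx₂y : x₂ < y) (hy : y ≤ 1) :
    slope D x₁ y ≤ slope D x₂ y := by
  rw [slope_comm D x₁ y, slope_comm D x₂ y, slope_def_field, slope_def_field]
  exact hconv.secant_mono ⟨hx₁.trans (hx₁₂.trans hx₂y.le), hy⟩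
    ⟨hx₁, (hx₁₂.trans hx₂y.le).trans hy⟩ ⟨hx₁.trans hx₁₂, hx₂y.le.trans hy⟩
    ((hx₁₂.trans_lt hx₂y).ne) (hx₂y.ne) hx₁₂

lemma phi_monoOn : MonotoneOn (phi D) (Set.Ico (0:ℝ) 1) := by
  intro x₁ hx₁ x₂ hx₂ h12
  refine le_csInf ((nonempty_Ioo.2 hx₂.2).image _) ?_
  rintro - ⟨y, hy, rfl⟩
  have hy1 : y ∈ Set.Ioo x₁ 1 := ⟨h12.trans_lt hy.1, hy.2⟩
  exact (phi_le_slope hD hx₁.1 hy1).trans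
    (slope_mono_left hD hconv hx₁.1 h12 hy.1 hy.2.le)

lemma phi_hasDeriv {x : ℝ} (hx : x ∈ Set.Ico (0:ℝ) 1) :
    HasDerivWithinAt D (phi D x) (Set.Ioi x) x := by
  rw [hasDerivWithinAt_iff_tendsto_slope]
  have : Set.Ioi x \ {x} = Set.Ioi x := diff_singleton_eq_self (fun h => lt_irrefl x h)
  rw [this]
  exact MonotoneOn.tendsto_nhdsWithin_Ioo_right (nonempty_Ioo.2 hx.2)
    (fun y hy z hz hyz => slope_mono_right hD hconv hx.1 hy hz hyz)
    (bddBelow_slopes hD hx.1)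

lemma contOn (hDrc : ContinuousWithinAt D (Set.Icc 0 1) 0) {a b : ℝ} (ha : 0 ≤ a) (hb : b < 1) :
    ContinuousOn D (Set.Icc a b) := by
  have h01 : ContinuousOn D (Set.Icc 0 b) := by
    intro x hx
    rcases eq_or_lt_of_le hx.1 with h0 | h0
    · subst h0
      exact hDrc.mono (Icc_subset_Icc le_rfl hb.le)
    · have hio : x ∈ Set.Ioo (0:ℝ) 1 := ⟨h0, hx.2.trans_lt hb⟩
      have : ContinuousOn D (Set.Ioo 0 1) := by
        have := hconv.continuousOn_interior
        rwa [interior_Icc] at this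
      exact ((this.continuousAt (isOpen_Ioo.mem_nhds hio))).continuousWithinAt
  exact h01.mono (Icc_subset_Icc ha le_rfl)

lemma ftc (hDrc : ContinuousWithinAt D (Set.Icc 0 1) 0) {a b : ℝ}
    (ha : 0 ≤ a) (hab : a ≤ b) (hb : b < 1) :
    ∫ u in a..b, phi D u = D b - D a := by
  refine intervalIntegral.integral_eq_sub_of_hasDeriv_right_of_le hab
    (contOn hD hconv hDrc ha hb) (fun x hx => phi_hasDeriv hD hconv ⟨ha.trans hx.1.le, hx.2.trans hb⟩) ?_
  refine MonotoneOn.intervalIntegrable ?_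
  rw [uIcc_of_le hab]
  exact (phi_monoOn hD hconv).mono (fun x hx => ⟨ha.trans hx.1, hx.2.trans_lt hb⟩)

/-- Reparametrized right derivative: `H t = phi D (1 - 1/t)` for `t ≥ 1`, `0` below. -/
noncomputable def H (D : ℝ → ℝ) : ℝ → ℝ := fun t => if t < 1 then 0 else phi D (1 - t⁻¹)

omit hD hconv in
lemma mem_Ico_of_one_le {t : ℝ} (ht : 1 ≤ t) : 1 - t⁻¹ ∈ Set.Ico (0:ℝ) 1 := by
  have ht0 : 0 < t := lt_of_lt_of_le one_pos ht
  constructor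
  · have : t⁻¹ ≤ 1 := inv_le_one_of_one_le₀ ht
    linarith
  · have : 0 < t⁻¹ := inv_pos.2 ht0
    linarith

lemma H_mono : Monotone (H D) := by
  intro s t hst
  unfold H
  by_cases ht : t < 1
  · rw [if_pos (hst.trans_lt ht), if_pos ht]
  · rw [if_neg ht]
    push_neg at ht
    by_cases hs : s < 1
    · rw [if_pos hs]
      exact phi_nonneg hD (mem_Ico_of_one_le ht)
    · rw [if_neg hs]
      push_neg at hs
      refine phi_monoOn hD hconv (mem_Ico_of_one_le hs) (mem_Ico_of_one_le ht) ?_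
      have h1 : t⁻¹ ≤ s⁻¹ := by
        apply inv_anti₀ (lt_of_lt_of_le one_pos hs) hst
      linarith

/-- The Stieltjes function associated to `H`. -/
noncomputable def G : StieltjesFunction ℝ := (H_mono hD hconv).stieltjesFunction

lemma G_apply (t : ℝ) : G hD hconv t = Function.rightLim (H D) t :=
  Monotone.stieltjesFunction_eq _ t

lemma G_eq_zero {t : ℝ} (ht : t < 1) : G hD hconv t = 0 := by
  have h1 : G hD hconv t = Function.rightLim (H D) t := Monotone.stieltjesFunction_eq _ t
  have h2 : H D t ≤ Function.rightLim (H D) t := (H_mono hD hconv).le_rightLim le_rfl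
  have h3 : Function.rightLim (H D) t ≤ H D ((t+1)/2) :=
    (H_mono hD hconv).rightLim_le (by linarith)
  rw [H, if_pos ht] at h2
  rw [H, if_pos (by linarith : (t+1)/2 < 1)] at h3
  rw [h1]; linarith

lemma G_le {u x : ℝ} (hu : u ∈ Set.Ioo (0:ℝ) 1) (hx : x < (1-u)⁻¹) :
    G hD hconv x ≤ phi D u := by
  by_cases hx1 : x < 1
  · rw [G_eq_zero hD hconv hx1]
    exact phi_nonneg hD ⟨hu.1.le, hu.2⟩
  · push_neg at hx1
    set y := (x + (1-u)⁻¹)/2 with hy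
    have hxy : x < y := by rw [hy]; linarith
    have hyr : y < (1-u)⁻¹ := by rw [hy]; linarith
    have hy1 : 1 ≤ y := hx1.trans hxy.le
    have h1 : G hD hconv x ≤ H D y := by
      rw [G_apply]
      exact (H_mono hD hconv).rightLim_le hxy
    have h2 : H D y = phi D (1 - y⁻¹) := if_neg (not_lt.2 hy1)
    have harg : 1 - y⁻¹ ≤ u := by
      have hy0 : 0 < y := lt_of_lt_of_le one_pos hy1
      have h1u : 0 < 1 - u := by linarith [hu.2]
      have : (1-u) < y⁻¹ := by
        have h2 := inv_strictAntiOn (Set.mem_Ioi.2 hy0) (Set.mem_Ioi.2 (inv_pos.2 h1u)) hyr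
        simp only [inv_inv] at h2
        exact h2
      linarith
    have := phi_monoOn hD hconv (mem_Ico_of_one_le hy1) ⟨hu.1.le, hu.2⟩ harg
    linarith

lemma phi_le_leftLimG {s u : ℝ} (hs : s ∈ Set.Ico (0:ℝ) 1) (hsu : s < u) (hu : u < 1) :
    phi D s ≤ Function.leftLim (G hD hconv) ((1-u)⁻¹) := by
  have h1s : 0 < 1 - s := by linarith [hs.2]
  have h1u : 0 < 1 - u := by linarith
  have hs1 : 1 ≤ (1-s)⁻¹ := by
    have := inv_anti₀ h1s (by linarith [hs.1] : 1 - s ≤ 1)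
    rwa [inv_one] at this
  have key : phi D s = H D ((1-s)⁻¹) := by
    rw [H, if_neg (not_lt.2 hs1), inv_inv, show 1 - (1 - s) = s by ring]
  have h2 : H D ((1-s)⁻¹) ≤ G hD hconv ((1-s)⁻¹) := by
    rw [G_apply]
    exact (H_mono hD hconv).le_rightLim le_rfl
  have h3 : G hD hconv ((1-s)⁻¹) ≤ Function.leftLim (G hD hconv) ((1-u)⁻¹) := by
    refine (G hD hconv).mono.le_leftLim ?_
    exact inv_strictAntiOn (Set.mem_Ioi.2 h1u) (Set.mem_Ioi.2 h1s) (by linarith)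
  linarith [key ▸ h2]

lemma leftLimG_le {u : ℝ} (hu : u ∈ Set.Ioo (0:ℝ) 1) :
    Function.leftLim (G hD hconv) ((1-u)⁻¹) ≤ phi D u := by
  rw [(G hD hconv).mono.leftLim_eq_sSup]
  refine csSup_le ((nonempty_Iio).image _) ?_
  rintro - ⟨x, hx, rfl⟩
  exact G_le hD hconv hu hx

/-- The representing measure: pushforward of the Stieltjes measure of `H` under `t ↦ 1 - 1/t`. -/
noncomputable def nu : Measure ℝ :=
  ((G hD hconv).measure.restrict (Set.Ici 1)).map (fun t => 1 - t⁻¹)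

omit hD hconv in
lemma m_measurable : Measurable (fun t : ℝ => 1 - t⁻¹) :=
  measurable_const.sub measurable_inv

lemma nu_compl : nu hD hconv (Set.Ico (0:ℝ) 1)ᶜ = 0 := by
  rw [nu, Measure.map_apply m_measurable (measurableSet_Ico.compl),
    Measure.restrict_apply (m_measurable (measurableSet_Ico.compl))]
  have hempty : (fun t : ℝ => 1 - t⁻¹) ⁻¹' (Set.Ico (0:ℝ) 1)ᶜ ∩ Set.Ici 1 = ∅ := by
    apply Set.eq_empty_iff_forall_notMem.2
    rintro t ⟨h1, h2⟩
    exact h1 (mem_Ico_of_one_le h2)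
  rw [hempty]
  exact measure_empty

lemma leftLimG_one : Function.leftLim (G hD hconv) 1 = 0 := by
  rw [(G hD hconv).mono.leftLim_eq_sSup]
  have himg : (G hD hconv) '' Set.Iio 1 = {0} := by
    ext x
    simp only [Set.mem_image, Set.mem_singleton_iff]
    constructor
    · rintro ⟨t, ht, rfl⟩; exact G_eq_zero hD hconv ht
    · rintro rfl; exact ⟨0, by norm_num, G_eq_zero hD hconv (by norm_num)⟩
  rw [himg, csSup_singleton]

lemma nu_Iio {u : ℝ} (hu : u ∈ Set.Ioo (0:ℝ) 1) :
    nu hD hconv (Set.Iio u) = ENNReal.ofReal (Function.leftLim (G hD hconv) ((1-u)⁻¹)) := by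
  have h1u : 0 < 1 - u := by linarith [hu.2]
  rw [nu, Measure.map_apply m_measurable measurableSet_Iio,
    Measure.restrict_apply (m_measurable measurableSet_Iio)]
  have hset : (fun t : ℝ => 1 - t⁻¹) ⁻¹' Set.Iio u ∩ Set.Ici 1 = Set.Ico 1 ((1-u)⁻¹) := by
    ext t
    simp only [Set.mem_inter_iff, Set.mem_preimage, Set.mem_Iio, Set.mem_Ici, Set.mem_Ico]
    constructor
    · rintro ⟨h1, h2⟩
      refine ⟨h2, ?_⟩
      have ht0 : 0 < t := lt_of_lt_of_le one_pos h2
      have h3 : 1 - u < t⁻¹ := by linarith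
      have h4 := inv_strictAntiOn (Set.mem_Ioi.2 h1u) (Set.mem_Ioi.2 (inv_pos.2 ht0)) h3
      simp only [inv_inv] at h4
      exact h4
    · rintro ⟨h2, h1⟩
      refine ⟨?_, h2⟩
      have ht0 : 0 < t := lt_of_lt_of_le one_pos h2
      have h4 := inv_strictAntiOn (Set.mem_Ioi.2 ht0) (Set.mem_Ioi.2 (inv_pos.2 h1u)) h1
      simp only [inv_inv] at h4
      linarith
  rw [hset, StieltjesFunction.measure_Ico, leftLimG_one, sub_zero]

/-- The bad set where `nu (Iio u)` might differ from `ofReal (phi D u)` is countable. -/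
lemma bad_countable :
    Set.Countable {u : ℝ | u ∈ Set.Ioo (0:ℝ) 1 ∧
      nu hD hconv (Set.Iio u) ≠ ENNReal.ofReal (phi D u)} := by
  have hcount := (H_mono hD hconv).countable_not_continuousAt
  refine Set.Countable.mono ?_ (hcount.image (fun t => 1 - t⁻¹))
  rintro u ⟨hu, hne⟩
  have h1u : 0 < 1 - u := by linarith [hu.2]
  refine ⟨(1-u)⁻¹, ?_, by show 1 - ((1-u)⁻¹)⁻¹ = u; rw [inv_inv]; ring⟩
  simp only [Set.mem_setOf_eq]
  intro hcont
  apply hne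
  rw [nu_Iio hD hconv hu]
  congr 1
  -- at continuity points, `leftLim G r = H r = phi D u`
  have hr1 : 1 ≤ (1-u)⁻¹ := by
    have := inv_anti₀ h1u (by linarith [hu.1] : 1 - u ≤ 1)
    rwa [inv_one] at this
  have hHr : H D ((1-u)⁻¹) = phi D u := by
    rw [H, if_neg (not_lt.2 hr1), inv_inv, show 1 - (1 - u) = u by ring]
  have hle : Function.leftLim (G hD hconv) ((1-u)⁻¹) ≤ phi D u := leftLimG_le hD hconv hu
  have hge : phi D u ≤ Function.leftLim (G hD hconv) ((1-u)⁻¹) := by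
    have hLR := (H_mono hD hconv).continuousAt_iff_leftLim_eq_rightLim.1 hcont
    have hLH : Function.leftLim (H D) ((1-u)⁻¹) = H D ((1-u)⁻¹) := by
      have h1 : Function.leftLim (H D) ((1-u)⁻¹) ≤ H D ((1-u)⁻¹) :=
        (H_mono hD hconv).leftLim_le le_rfl
      have h2 : H D ((1-u)⁻¹) ≤ Function.rightLim (H D) ((1-u)⁻¹) :=
        (H_mono hD hconv).le_rightLim le_rfl
      rw [← hLR] at h2
      linarith
    have hHle : Function.leftLim (H D) ((1-u)⁻¹) ≤ Function.leftLim (G hD hconv) ((1-u)⁻¹) := by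
      rw [(H_mono hD hconv).leftLim_eq_sSup]
      refine csSup_le (nonempty_Iio.image _) ?_
      rintro - ⟨s, hs, rfl⟩
      calc H D s ≤ G hD hconv s := by
            rw [G_apply]; exact (H_mono hD hconv).le_rightLim le_rfl
        _ ≤ _ := (G hD hconv).mono.le_leftLim hs
    rw [← hHr, ← hLH]
    exact hHle
  linarith

lemma nu_sigmaFinite : SigmaFinite (nu hD hconv) := by
  refine ⟨⟨⟨fun n => Set.Iio (1 - (1:ℝ)/(n+2)) ∪ (Set.Ico (0:ℝ) 1)ᶜ,
    fun _ => Set.mem_univ _, ?_, ?_⟩⟩⟩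
  · intro n
    have hmem : (1 - (1:ℝ)/(n+2)) ∈ Set.Ioo (0:ℝ) 1 := by
      have h0 : (0:ℝ) < (n:ℝ)+2 := by positivity
      have h1 : (1:ℝ)/(n+2) ≤ 1/2 := by
        apply one_div_le_one_div_of_le (by norm_num)
        have : (0:ℝ) ≤ n := Nat.cast_nonneg n
        linarith
      have h2 : (0:ℝ) < 1/((n:ℝ)+2) := by positivity
      constructor <;> linarith
    refine lt_of_le_of_lt (measure_union_le _ _) ?_
    rw [nu_compl hD hconv, nu_Iio hD hconv hmem, add_zero]
    exact ENNReal.ofReal_lt_top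
  · apply Set.eq_univ_iff_forall.2
    intro x
    by_cases hx : x ∈ Set.Ico (0:ℝ) 1
    · obtain ⟨n, hn⟩ := exists_nat_one_div_lt (by linarith [hx.2] : (0:ℝ) < 1 - x)
      refine Set.mem_iUnion.2 ⟨n, Or.inl ?_⟩
      simp only [Set.mem_Iio]
      have h0 : (0:ℝ) < (n:ℝ)+1 := by positivity
      have : (1:ℝ)/(n+2) ≤ 1/(n+1) := by
        apply one_div_le_one_div_of_le h0
        linarith
      linarith
    · exact Set.mem_iUnion.2 ⟨0, Or.inr hx⟩

lemma w_mono : Monotone (fun u => nu hD hconv (Set.Iio u)) :=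
  fun _ _ h => measure_mono (Set.Iio_subset_Iio h)

lemma lintegral_nu_Iio (hDrc : ContinuousWithinAt D (Set.Icc 0 1) 0) {a b : ℝ}
    (ha : 0 < a) (hab : a ≤ b) (hb : b < 1) :
    ∫⁻ u in Set.Ioc a b, nu hD hconv (Set.Iio u) = ENNReal.ofReal (D b - D a) := by
  have hnull : volume {u : ℝ | u ∈ Set.Ioo (0:ℝ) 1 ∧
      nu hD hconv (Set.Iio u) ≠ ENNReal.ofReal (phi D u)} = 0 :=
    (bad_countable hD hconv).measure_zero _
  have hae : ∀ᵐ u ∂(volume.restrict (Set.Ioc a b)),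
      nu hD hconv (Set.Iio u) = ENNReal.ofReal (phi D u) := by
    rw [ae_restrict_iff' measurableSet_Ioc]
    filter_upwards [measure_eq_zero_iff_ae_notMem.1 hnull] with u hu hmem
    by_contra hne
    exact hu ⟨⟨lt_trans ha hmem.1, lt_of_le_of_lt hmem.2 hb⟩, hne⟩
  rw [lintegral_congr_ae hae]
  have hmono : MonotoneOn (phi D) (Set.Icc a b) :=
    (phi_monoOn hD hconv).mono (fun x hx => ⟨ha.le.trans hx.1, hx.2.trans_lt hb⟩)
  have hii : IntervalIntegrable (phi D) volume a b :=
    MonotoneOn.intervalIntegrable (by rw [uIcc_of_le hab]; exact hmono)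
  have hint : IntegrableOn (phi D) (Set.Ioc a b) volume := by
    rw [intervalIntegrable_iff_integrableOn_Ioc_of_le hab] at hii
    exact hii
  have hnn : 0 ≤ᵐ[volume.restrict (Set.Ioc a b)] phi D := by
    rw [EventuallyLE, ae_restrict_iff' measurableSet_Ioc]
    exact Eventually.of_forall (fun u hu =>
      phi_nonneg hD ⟨le_of_lt (lt_of_lt_of_le ha hu.1.le), hu.2.trans_lt hb⟩)
  rw [← ofReal_integral_eq_lintegral_ofReal hint hnn]
  congr 1
  rw [← intervalIntegral.integral_of_le hab]
  exact ftc hD hconv hDrc ha.le hab hb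

lemma measure_eq (hDrc : ContinuousWithinAt D (Set.Icc 0 1) 0) (Q : Measure ℝ)
    [IsProbabilityMeasure Q]
    (hQioc : ∀ a b : ℝ, 0 < a → a ≤ b → b < 1 → Q (Set.Ioc a b) = ENNReal.ofReal (D b - D a)) :
    Q.restrict (Set.Ioo 0 1)
      = (volume.withDensity (fun u => nu hD hconv (Set.Iio u))).restrict (Set.Ioo 0 1) := by
  set w : ℝ → ℝ≥0∞ := fun u => nu hD hconv (Set.Iio u) with hw
  refine Measure.ext_of_Ioc' _ _ (fun x y _ => measure_ne_top _ _) ?_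
  intro x y hxy
  rw [Measure.restrict_apply measurableSet_Ioc, Measure.restrict_apply measurableSet_Ioc]
  set S := Set.Ioc x y ∩ Set.Ioo (0:ℝ) 1 with hS
  set A : ℕ → ℝ := fun n => max x (1/(n+2)) with hA
  set B : ℕ → ℝ := fun n => min y (1 - 1/(n+2)) with hB
  have heps : ∀ n : ℕ, (0:ℝ) < 1/((n:ℝ)+2) := by intro n; positivity
  have hepsanti : ∀ n m : ℕ, n ≤ m → (1:ℝ)/(m+2) ≤ 1/(n+2) := by
    intro n m hnm
    apply one_div_le_one_div_of_le (by positivity)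
    have : (n:ℝ) ≤ m := Nat.cast_le.2 hnm
    linarith
  have hmono : Monotone (fun n => Set.Ioc (A n) (B n)) := by
    intro n m hnm
    apply Set.Ioc_subset_Ioc
    · exact max_le_max le_rfl (hepsanti n m hnm)
    · exact min_le_min le_rfl (by linarith [hepsanti n m hnm])
  have hSeq : S = ⋃ n, Set.Ioc (A n) (B n) := by
    ext u
    simp only [hS, hA, hB, Set.mem_inter_iff, Set.mem_Ioc, Set.mem_Ioo, Set.mem_iUnion,
      max_lt_iff, le_min_iff]
    constructor
    · rintro ⟨⟨hxu, huy⟩, h0u, hu1⟩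
      obtain ⟨n, hn⟩ := exists_nat_one_div_lt (show (0:ℝ) < min u (1-u) by
        apply lt_min h0u; linarith)
      have h2 : (1:ℝ)/(n+2) ≤ 1/(n+1) := by
        apply one_div_le_one_div_of_le (by positivity); linarith [(Nat.cast_nonneg n : (0:ℝ) ≤ n)]
      refine ⟨n, ⟨hxu, ?_⟩, huy, ?_⟩
      · calc (1:ℝ)/(n+2) ≤ 1/(n+1) := h2
          _ < min u (1-u) := hn
          _ ≤ u := min_le_left _ _
      · have : (1:ℝ)/(n+1) < 1 - u := lt_of_lt_of_le hn (min_le_right _ _)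
        linarith
    · rintro ⟨n, ⟨hxu, hu⟩, huy, hu1⟩
      exact ⟨⟨hxu, huy⟩, lt_trans (heps n) hu, by linarith [heps n]⟩
  have hkey : ∀ n, Q (Set.Ioc (A n) (B n)) = (volume.withDensity w) (Set.Ioc (A n) (B n)) := by
    intro n
    by_cases hab : A n ≤ B n
    · have hA0 : 0 < A n := lt_of_lt_of_le (heps n) (le_max_right _ _)
      have hB1 : B n < 1 := lt_of_le_of_lt (min_le_right _ _) (by linarith [heps n])
      rw [hQioc _ _ hA0 hab hB1, withDensity_apply _ measurableSet_Ioc]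
      exact (lintegral_nu_Iio hD hconv hDrc hA0 hab hB1).symm
    · rw [Set.Ioc_eq_empty (fun h => hab h.le)]
      simp
  rw [hSeq, hmono.directed_le.measure_iUnion, hmono.directed_le.measure_iUnion]
  exact iSup_congr hkey

lemma main_swap (hDrc : ContinuousWithinAt D (Set.Icc 0 1) 0) (Q : Measure ℝ)
    [IsProbabilityMeasure Q]
    (hQioc : ∀ a b : ℝ, 0 < a → a ≤ b → b < 1 → Q (Set.Ioc a b) = ENNReal.ofReal (D b - D a))
    (f : ℝ → ℝ≥0∞) (hf : Measurable f) :
    ∫⁻ u in Set.Ioo (0:ℝ) 1, f u ∂Q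
      = ∫⁻ α in Set.Ico (0:ℝ) 1, ∫⁻ u in Set.Ioo α 1, f u ∂volume ∂(nu hD hconv) := by
  have hSF : SigmaFinite (nu hD hconv) := nu_sigmaFinite hD hconv
  set w : ℝ → ℝ≥0∞ := fun u => nu hD hconv (Set.Iio u) with hwdef
  have hwmeas : Measurable w := (w_mono hD hconv).measurable
  have h1 : ∫⁻ u in Set.Ioo (0:ℝ) 1, f u ∂Q
      = ∫⁻ u, (w * f) u ∂(volume.restrict (Set.Ioo 0 1)) := by
    show ∫⁻ u, f u ∂(Q.restrict (Set.Ioo 0 1)) = _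
    rw [measure_eq hD hconv hDrc Q hQioc, restrict_withDensity measurableSet_Ioo,
      lintegral_withDensity_eq_lintegral_mul _ hwmeas hf]
  rw [h1]
  have h2 : ∀ u : ℝ, (w * f) u
      = ∫⁻ α, Set.indicator {p : ℝ | p < u} (fun _ => f u) α ∂(nu hD hconv) := by
    intro u
    rw [lintegral_indicator_const (by exact measurableSet_Iio)]
    show w u * f u = f u * nu hD hconv (Set.Iio u)
    rw [mul_comm]
  rw [lintegral_congr h2]
  have h3 := lintegral_lintegral_swap (μ := volume.restrict (Set.Ioo (0:ℝ) 1))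
    (ν := nu hD hconv)
    (f := fun u α => Set.indicator {p : ℝ | p < u} (fun _ => f u) α) ?_
  · rw [h3]
    have h4 : ∀ α : ℝ, ∫⁻ u, Set.indicator {p : ℝ | p < u} (fun _ => f u) α
        ∂(volume.restrict (Set.Ioo (0:ℝ) 1))
        = ∫⁻ u in Set.Ioi α ∩ Set.Ioo (0:ℝ) 1, f u ∂volume := by
      intro α
      have : ∀ u : ℝ, Set.indicator {p : ℝ | p < u} (fun _ => f u) α
          = Set.indicator (Set.Ioi α) f u := by
        intro u
        by_cases h : α < u
        · rw [Set.indicator_of_mem (by exact h) , Set.indicator_of_mem (by exact h)]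
        · rw [Set.indicator_of_notMem (by exact h), Set.indicator_of_notMem (by exact h)]
      rw [lintegral_congr this, lintegral_indicator measurableSet_Ioi,
        Measure.restrict_restrict measurableSet_Ioi]
    rw [lintegral_congr h4]
    rw [← lintegral_add_compl (fun α => ∫⁻ u in Set.Ioi α ∩ Set.Ioo (0:ℝ) 1, f u ∂volume)
      (measurableSet_Ico (a := (0:ℝ)) (b := 1)) (μ := nu hD hconv)]
    rw [setLIntegral_measure_zero _ _ (nu_compl hD hconv), add_zero]
    refine setLIntegral_congr_fun measurableSet_Ico ?_
    refine (fun α hα => ?_)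
    have hset : Set.Ioi α ∩ Set.Ioo (0:ℝ) 1 = Set.Ioo α 1 := by
      ext u
      simp only [Set.mem_inter_iff, Set.mem_Ioi, Set.mem_Ioo]
      constructor
      · rintro ⟨h1, h2, h3⟩; exact ⟨h1, h3⟩
      · rintro ⟨h1, h2⟩; exact ⟨h1, lt_of_le_of_lt hα.1 h1, h2⟩
    beta_reduce
    rw [hset]
  · apply Measurable.aemeasurable
    apply Measurable.indicator
    · exact hf.comp measurable_fst
    · exact measurableSet_lt measurable_snd measurable_fst

end

section Quantile

variable {Ω : Type*} [MeasurableSpace Ω] (P : Measure Ω) [IsProbabilityMeasure P] (X : Ω → ℝ)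

lemma distFun_mono : Monotone (fun x => (P {ω | X ω ≤ x}).toReal) := fun a b h =>
  ENNReal.toReal_mono (measure_ne_top P _) (measure_mono (fun ω hω => le_trans hω h))

lemma exists_distFun_ge {u : ℝ} (hu : u < 1) :
    ∃ n : ℕ, u ≤ (P {ω | X ω ≤ (n:ℝ)}).toReal := by
  by_contra hc
  push_neg at hc
  have hmono : Monotone (fun n : ℕ => {ω | X ω ≤ (n:ℝ)}) := by
    intro n m hnm ω hω
    simp only [Set.mem_setOf_eq] at hω ⊢
    exact le_trans hω (Nat.cast_le.2 hnm)
  have hun : ⋃ n : ℕ, {ω | X ω ≤ (n:ℝ)} = Set.univ := by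
    apply Set.eq_univ_iff_forall.2
    intro ω
    obtain ⟨n, hn⟩ := exists_nat_ge (X ω)
    exact Set.mem_iUnion.2 ⟨n, hn⟩
  have h1 : P Set.univ = ⨆ n : ℕ, P {ω | X ω ≤ (n:ℝ)} := by
    rw [← hun, hmono.directed_le.measure_iUnion]
  have h2 : ∀ n : ℕ, P {ω | X ω ≤ (n:ℝ)} ≤ ENNReal.ofReal u := by
    intro n
    have := hc n
    rw [← ENNReal.ofReal_toReal (measure_ne_top P _)]
    exact ENNReal.ofReal_le_ofReal this.le
  have h3 : P Set.univ ≤ ENNReal.ofReal u := h1 ▸ iSup_le h2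
  rw [measure_univ] at h3
  exact absurd (lt_of_le_of_lt h3 (ENNReal.ofReal_lt_one.2 hu)) (lt_irrefl _)

lemma exists_distFun_lt (hX : Measurable X) {u : ℝ} (hu : 0 < u) :
    ∃ n : ℕ, (P {ω | X ω ≤ -(n:ℝ)}).toReal < u := by
  by_contra hc
  push_neg at hc
  have hanti : Antitone (fun n : ℕ => {ω | X ω ≤ -(n:ℝ)}) := by
    intro n m hnm ω hω
    simp only [Set.mem_setOf_eq] at hω ⊢
    refine le_trans hω ?_
    simp only [neg_le_neg_iff, Nat.cast_le]
    exact hnm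
  have hint : ⋂ n : ℕ, {ω | X ω ≤ -(n:ℝ)} = ∅ := by
    apply Set.eq_empty_iff_forall_notMem.2
    intro ω hω
    obtain ⟨n, hn⟩ := exists_nat_gt (-(X ω))
    have := Set.mem_iInter.1 hω n
    simp only [Set.mem_setOf_eq] at this
    linarith
  have h0 : P (⋂ n : ℕ, {ω | X ω ≤ -(n:ℝ)}) = 0 := by rw [hint]; exact measure_empty
  have h1 := hanti.measure_iInter (μ := P)
    (fun n => (hX measurableSet_Iic).nullMeasurableSet) ⟨0, measure_ne_top P _⟩
  rw [h0] at h1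
  have h2 : ENNReal.ofReal u ≤ ⨅ n : ℕ, P {ω | X ω ≤ -(n:ℝ)} := by
    refine le_iInf (fun n => ?_)
    have := hc n
    rw [← ENNReal.ofReal_toReal (measure_ne_top P ({ω | X ω ≤ -(n:ℝ)}))]
    exact ENNReal.ofReal_le_ofReal this
  rw [← h1] at h2
  simp only [nonpos_iff_eq_zero, le_zero_iff] at h2
  exact absurd h2 (ENNReal.ofReal_pos.2 hu).ne'

lemma quantile_monoOn (hX : Measurable X) :
    MonotoneOn (quantile P X) (Set.Ioo (0:ℝ) 1) := by
  intro u hu v hv huv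
  unfold quantile distFun
  apply csInf_le_csInf
  · obtain ⟨n, hn⟩ := exists_distFun_lt P X hX hu.1
    refine ⟨-(n:ℝ), fun x hx => ?_⟩
    by_contra hlt
    push_neg at hlt
    have hle : (P {ω | X ω ≤ x}).toReal ≤ (P {ω | X ω ≤ -(n:ℝ)}).toReal :=
      distFun_mono P X hlt.le
    simp only [Set.mem_setOf_eq] at hx
    linarith
  · obtain ⟨n, hn⟩ := exists_distFun_ge P X hv.2
    exact ⟨(n:ℝ), hn⟩
  · intro x hx
    simp only [Set.mem_setOf_eq] at hx ⊢
    exact le_trans huv hx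

/-- Globally monotone clamped version of the quantile function. -/
noncomputable def qclamp (n : ℕ) : ℝ → ℝ :=
  fun u => quantile P X (max (1/(n+2)) (min u (1 - 1/(n+2))))

lemma clamp_mem (n : ℕ) (u : ℝ) :
    max (1/((n:ℝ)+2)) (min u (1 - 1/((n:ℝ)+2))) ∈ Set.Ioo (0:ℝ) 1 := by
  have h0 : (0:ℝ) < 1/((n:ℝ)+2) := by positivity
  have h2 : (1:ℝ)/((n:ℝ)+2) ≤ 1/2 := by
    apply one_div_le_one_div_of_le (by norm_num)
    have : (0:ℝ) ≤ n := Nat.cast_nonneg n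
    linarith
  constructor
  · exact lt_of_lt_of_le h0 (le_max_left _ _)
  · apply max_lt (by linarith)
    exact lt_of_le_of_lt (min_le_right _ _) (by linarith)

lemma qclamp_mono (hX : Measurable X) (n : ℕ) : Monotone (qclamp P X n) := by
  intro a b hab
  exact quantile_monoOn P X hX (clamp_mem n a) (clamp_mem n b)
    (max_le_max le_rfl (min_le_min hab le_rfl))

lemma qclamp_eventually_eq {u : ℝ} (hu : u ∈ Set.Ioo (0:ℝ) 1) :
    ∀ᶠ n in atTop, qclamp P X n u = quantile P X u := by
  obtain ⟨N, hN⟩ := exists_nat_one_div_lt (show (0:ℝ) < min u (1-u) by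
    exact lt_min hu.1 (by linarith [hu.2]))
  rw [eventually_atTop]
  refine ⟨N, fun n hn => ?_⟩
  have h1 : (1:ℝ)/(n+2) ≤ 1/(N+1) := by
    apply one_div_le_one_div_of_le (by positivity)
    have : (N:ℝ) ≤ n := Nat.cast_le.2 hn
    linarith
  have h2 : (1:ℝ)/(n+2) < u := lt_of_le_of_lt h1 (lt_of_lt_of_le hN (min_le_left _ _))
  have h3 : (1:ℝ)/(n+2) < 1 - u := lt_of_le_of_lt h1 (lt_of_lt_of_le hN (min_le_right _ _))
  unfold qclamp
  congr 1
  rw [min_eq_left (by linarith), max_eq_right (by linarith)]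

end Quantile

lemma ereal_helper {α : ℝ} (hα : α ∈ Set.Ico (0:ℝ) 1) (z : EReal) :
    ((1 - α : ℝ) : EReal) * (((1 / (1 - α) : ℝ) : EReal) * z) = z := by
  rw [← mul_assoc, ← EReal.coe_mul]
  have hne : (1:ℝ) - α ≠ 0 := by
    have := hα.2; intro h; rw [sub_eq_zero] at h; exact absurd h.symm (ne_of_lt this)
  have h : (1 - α) * (1 / (1 - α)) = 1 := by field_simp
  rw [h, EReal.coe_one, one_mul]

end KusuokaAux

/-- If `D` is convex, then there is a measure `ν` on the Borel sets of `[0,1)` such that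
`ϱ_Q[X] = ∫_{[0,1)} (1-α)·ES_α[X] dν(α)` for every `X ∈ 𝓛_Q`, where
`(1-α)·ES_α[X] = ∫_{(α,1)} F^←_X(u) dλ(u)` (the `EReal`-valued integral is expressed as the
difference of the `ν`-integrals of the positive and negative parts). -/
theorem rho_eq_integral_ES_of_convex {Ω : Type*} [MeasurableSpace Ω]
    (P : Measure Ω) [IsProbabilityMeasure P] (D : ℝ → ℝ) (Q : Measure ℝ)
    (hD : IsDistortion D) (hQ : IsCorresponding D Q)
    (hconv : ConvexOn ℝ (Set.Icc (0:ℝ) 1) D) :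
    ∃ ν : Measure ℝ, ν (Set.Ico (0:ℝ) 1)ᶜ = 0 ∧
      ∀ X : Ω → ℝ, Measurable X → memLQ P Q X →
        (∀ α ∈ Set.Ico (0:ℝ) 1,
          ((1 - α : ℝ) : EReal) * ES P α X
            = ((∫⁻ u in Set.Ioo α 1, ENNReal.ofReal (max (quantile P X u) 0)) : EReal)
              - ((∫⁻ u in Set.Ioo α 1, ENNReal.ofReal (max (-(quantile P X u)) 0)) : EReal)) ∧
        rho P Q X
          = ((∫⁻ α in Set.Ico (0:ℝ) 1,
                ∫⁻ u in Set.Ioo α 1, ENNReal.ofReal (max (quantile P X u) 0) ∂volume ∂ν) : EReal)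
            - ((∫⁻ α in Set.Ico (0:ℝ) 1,
                ∫⁻ u in Set.Ioo α 1, ENNReal.ofReal (max (-(quantile P X u)) 0) ∂volume ∂ν) : EReal) := by
  classical
  obtain ⟨hQp, hQ1, hQioc⟩ := hQ
  haveI := hQp
  have hDm : ∀ ⦃a b : ℝ⦄, 0 ≤ a → a ≤ b → b ≤ 1 → D a ≤ D b := hD.mono
  have hDrc : ContinuousWithinAt D (Set.Icc 0 1) 0 := hD.rightCont 0 ⟨le_rfl, one_pos⟩
  refine ⟨KusuokaAux.nu hDm hconv, KusuokaAux.nu_compl hDm hconv, ?_⟩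
  intro X hX _hmem
  constructor
  · intro α hα
    show ((1 - α : ℝ) : EReal) * (((1 / (1 - α) : ℝ) : EReal) * _) = _
    exact KusuokaAux.ereal_helper hα _
  · have hFpm : Measurable (fun u => Filter.liminf
        (fun n => ENNReal.ofReal (max (KusuokaAux.qclamp P X n u) 0)) Filter.atTop) :=
      Measurable.liminf (fun n =>
        ((KusuokaAux.qclamp_mono P X hX n).measurable.max measurable_const).ennreal_ofReal)
    have hFmm : Measurable (fun u => Filter.liminf
        (fun n => ENNReal.ofReal (max (-(KusuokaAux.qclamp P X n u)) 0)) Filter.atTop) :=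
      Measurable.liminf (fun n =>
        ((KusuokaAux.qclamp_mono P X hX n).measurable.neg.max measurable_const).ennreal_ofReal)
    have hFp_eq : ∀ u ∈ Set.Ioo (0:ℝ) 1, Filter.liminf
        (fun n => ENNReal.ofReal (max (KusuokaAux.qclamp P X n u) 0)) Filter.atTop
        = ENNReal.ofReal (max (quantile P X u) 0) := by
      intro u hu
      rw [Filter.liminf_congr ((KusuokaAux.qclamp_eventually_eq P X hu).mono
        (fun n hn => by rw [hn]))]
      exact Filter.liminf_const _
    have hFm_eq : ∀ u ∈ Set.Ioo (0:ℝ) 1, Filter.liminf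
        (fun n => ENNReal.ofReal (max (-(KusuokaAux.qclamp P X n u)) 0)) Filter.atTop
        = ENNReal.ofReal (max (-(quantile P X u)) 0) := by
      intro u hu
      rw [Filter.liminf_congr ((KusuokaAux.qclamp_eventually_eq P X hu).mono
        (fun n hn => by rw [hn]))]
      exact Filter.liminf_const _
    have hswapP := KusuokaAux.main_swap hDm hconv hDrc Q hQioc _ hFpm
    have hswapM := KusuokaAux.main_swap hDm hconv hDrc Q hQioc _ hFmm
    have key_p : ∫⁻ u in Set.Ioo (0:ℝ) 1, ENNReal.ofReal (max (quantile P X u) 0) ∂Q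
        = ∫⁻ α in Set.Ico (0:ℝ) 1, ∫⁻ u in Set.Ioo α 1,
            ENNReal.ofReal (max (quantile P X u) 0) ∂volume ∂(KusuokaAux.nu hDm hconv) := by
      rw [← setLIntegral_congr_fun measurableSet_Ioo
        (fun u hu => hFp_eq u hu), hswapP]
      refine setLIntegral_congr_fun measurableSet_Ico
        (fun α hα => ?_)
      exact setLIntegral_congr_fun measurableSet_Ioo
        (fun u hu =>
          hFp_eq u ⟨lt_of_le_of_lt hα.1 hu.1, hu.2⟩)
    have key_m : ∫⁻ u in Set.Ioo (0:ℝ) 1, ENNReal.ofReal (max (-(quantile P X u)) 0) ∂Q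
        = ∫⁻ α in Set.Ico (0:ℝ) 1, ∫⁻ u in Set.Ioo α 1,
            ENNReal.ofReal (max (-(quantile P X u)) 0) ∂volume ∂(KusuokaAux.nu hDm hconv) := by
      rw [← setLIntegral_congr_fun measurableSet_Ioo
        (fun u hu => hFm_eq u hu), hswapM]
      refine setLIntegral_congr_fun measurableSet_Ico
        (fun α hα => ?_)
      exact setLIntegral_congr_fun measurableSet_Ioo
        (fun u hu =>
          hFm_eq u ⟨lt_of_le_of_lt hα.1 hu.1, hu.2⟩)
    rw [rho, key_p, key_m]
end

section
/- For every α ∈ (0,1) and every random variable X on (Ω,𝓕,P) with E[X^+] < ∞: ES_α[X] = F^←_X(α) + (1/(1−α))·E[(X − F^←_X(α))^+] = inf_{c ∈ ℝ} ( c + (1/(1−α))·E[(X−c)^+] ). -/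
open MeasureTheory

section Aux
variable {Ω : Type*} [MeasurableSpace Ω] (P : Measure Ω) [IsProbabilityMeasure P] (X : Ω → ℝ)

lemma distFun_mono : Monotone (distFun P X) := fun x y h =>
  ENNReal.toReal_mono (measure_ne_top _ _) (measure_mono fun ω hω => le_trans hω h)

lemma distFun_nonneg (x : ℝ) : 0 ≤ distFun P X x := ENNReal.toReal_nonneg

lemma ofReal_distFun (x : ℝ) : ENNReal.ofReal (distFun P X x) = P {ω | X ω ≤ x} :=
  ENNReal.ofReal_toReal (measure_ne_top _ _)

variable (hX : Measurable X)
include hX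

lemma exists_le_distFun {u : ℝ} (hu : u < 1) : ∃ x : ℝ, u ≤ distFun P X x := by
  have hm : Monotone (fun n : ℕ => {ω | X ω ≤ (n : ℝ)}) := by
    intro n m hnm ω hω
    simp only [Set.mem_setOf_eq] at hω ⊢
    exact hω.trans (by exact_mod_cast hnm)
  have hU : (⋃ n : ℕ, {ω | X ω ≤ (n : ℝ)}) = Set.univ := by
    ext ω
    simp only [Set.mem_iUnion, Set.mem_univ, iff_true, Set.mem_setOf_eq]
    obtain ⟨n, hn⟩ := exists_nat_ge (X ω)
    exact ⟨n, hn⟩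
  have ht := tendsto_measure_iUnion_atTop (μ := P) hm
  rw [hU, measure_univ] at ht
  have ht2 : Filter.Tendsto (fun n : ℕ => distFun P X n) Filter.atTop (nhds 1) := by
    have := (ENNReal.tendsto_toReal (by norm_num : (1:ENNReal) ≠ ⊤)).comp ht
    exact this
  obtain ⟨n, hn⟩ := (ht2.eventually_const_le hu).exists
  exact ⟨n, hn⟩

lemma exists_distFun_lt {u : ℝ} (hu : 0 < u) : ∃ x : ℝ, distFun P X x < u := by
  have hm : Antitone (fun n : ℕ => {ω | X ω ≤ -(n : ℝ)}) := by
    intro n m hnm ω hω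
    simp only [Set.mem_setOf_eq] at hω ⊢
    refine hω.trans (neg_le_neg ?_)
    exact_mod_cast hnm
  have hI : (⋂ n : ℕ, {ω | X ω ≤ -(n : ℝ)}) = ∅ := by
    ext ω
    simp only [Set.mem_iInter, Set.mem_empty_iff_false, iff_false, Set.mem_setOf_eq, not_forall]
    obtain ⟨n, hn⟩ := exists_nat_gt (-X ω)
    exact ⟨n, by push_neg; linarith⟩
  have ht := tendsto_measure_iInter_atTop (μ := P)
    (fun n => (measurableSet_le hX measurable_const).nullMeasurableSet) hm
    ⟨0, measure_ne_top _ _⟩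
  rw [hI, measure_empty] at ht
  have ht2 : Filter.Tendsto (fun n : ℕ => distFun P X (-(n:ℝ))) Filter.atTop (nhds 0) := by
    have := (ENNReal.tendsto_toReal (by norm_num : (0:ENNReal) ≠ ⊤)).comp ht
    exact this
  obtain ⟨n, hn⟩ := (ht2.eventually_lt_const hu).exists
  exact ⟨-(n:ℝ), hn⟩

lemma quantile_set_nonempty {u : ℝ} (hu : u < 1) : {x : ℝ | u ≤ distFun P X x}.Nonempty :=
  exists_le_distFun P X hX hu

lemma quantile_set_bddBelow {u : ℝ} (hu : 0 < u) : BddBelow {x : ℝ | u ≤ distFun P X x} := by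
  obtain ⟨x₀, hx₀⟩ := exists_distFun_lt P X hX hu
  refine ⟨x₀, fun y hy => ?_⟩
  by_contra h
  push_neg at h
  exact absurd hy (not_le.2 (lt_of_le_of_lt (distFun_mono P X h.le) hx₀))

lemma le_distFun_quantile {u : ℝ} (hu : u ∈ Set.Ioo (0:ℝ) 1) :
    u ≤ distFun P X (quantile P X u) := by
  set q := quantile P X u with hq
  have hne := quantile_set_nonempty P X hX hu.2
  have hbdd := quantile_set_bddBelow P X hX hu.1
  -- each F (q + 1/(n+1)) ≥ u
  have hstep : ∀ n : ℕ, ENNReal.ofReal u ≤ P {ω | X ω ≤ q + 1/(n+1)} := by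
    intro n
    have hpos : (0:ℝ) < 1/(n+1) := by positivity
    have : q < q + 1/(n+1) := by linarith
    obtain ⟨y, hy, hy2⟩ := exists_lt_of_csInf_lt hne this
    have : u ≤ distFun P X (q + 1/(n+1)) := le_trans hy (distFun_mono P X hy2.le)
    rw [← ofReal_distFun]
    exact ENNReal.ofReal_le_ofReal this
  have hm : Antitone (fun n : ℕ => {ω | X ω ≤ q + 1/(n+1)}) := by
    intro n m hnm ω hω
    have hc : ((n:ℝ)+1) ≤ ((m:ℝ)+1) := by exact_mod_cast Nat.succ_le_succ hnm
    have : (1:ℝ)/(m+1) ≤ 1/(n+1) := one_div_le_one_div_of_le (by positivity) hc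
    simp only [Set.mem_setOf_eq] at hω ⊢
    linarith
  have hI : (⋂ n : ℕ, {ω | X ω ≤ q + 1/(n+1)}) = {ω | X ω ≤ q} := by
    ext ω
    simp only [Set.mem_iInter, Set.mem_setOf_eq]
    constructor
    · intro h
      refine le_of_forall_pos_le_add fun ε hε => ?_
      obtain ⟨n, hn⟩ := exists_nat_one_div_lt hε
      exact le_trans (h n) (by linarith [hn])
    · intro h n
      have : (0:ℝ) < 1/(n+1) := by positivity
      linarith
  have ht := tendsto_measure_iInter_atTop (μ := P)
    (fun n => (measurableSet_le hX measurable_const).nullMeasurableSet) hm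
    ⟨0, measure_ne_top _ _⟩
  rw [hI] at ht
  have hle : ENNReal.ofReal u ≤ P {ω | X ω ≤ q} := ge_of_tendsto' ht hstep
  rw [← ofReal_distFun] at hle
  exact (ENNReal.ofReal_le_ofReal_iff (distFun_nonneg P X _)).1 hle

lemma quantile_le_iff {u x : ℝ} (hu : u ∈ Set.Ioo (0:ℝ) 1) :
    quantile P X u ≤ x ↔ u ≤ distFun P X x := by
  constructor
  · intro h
    exact le_trans (le_distFun_quantile P X hX hu) (distFun_mono P X h)
  · intro h
    exact csInf_le (quantile_set_bddBelow P X hX hu.1) h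

lemma quantile_monotoneOn : MonotoneOn (quantile P X) (Set.Ioo (0:ℝ) 1) :=
  fun u hu v hv huv =>
    (quantile_le_iff P X hX hu).2 (le_trans huv (le_distFun_quantile P X hX hv))

lemma measure_lt_quantile {u : ℝ} (hu : u ∈ Set.Ioo (0:ℝ) 1) :
    P {ω | X ω < quantile P X u} ≤ ENNReal.ofReal u := by
  set q := quantile P X u with hq
  have hbdd := quantile_set_bddBelow P X hX hu.1
  have hU : {ω | X ω < q} = ⋃ n : ℕ, {ω | X ω ≤ q - 1/(n+1)} := by
    ext ω
    simp only [Set.mem_iUnion, Set.mem_setOf_eq]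
    constructor
    · intro h
      obtain ⟨n, hn⟩ := exists_nat_one_div_lt (show (0:ℝ) < q - X ω by linarith)
      exact ⟨n, by linarith⟩
    · rintro ⟨n, hn⟩
      have : (0:ℝ) < 1/(n+1) := by positivity
      linarith
  have hm : Monotone (fun n : ℕ => {ω | X ω ≤ q - 1/(n+1)}) := by
    intro n m hnm ω hω
    have hc : ((n:ℝ)+1) ≤ ((m:ℝ)+1) := by exact_mod_cast Nat.succ_le_succ hnm
    have : (1:ℝ)/(m+1) ≤ 1/(n+1) := one_div_le_one_div_of_le (by positivity) hc
    simp only [Set.mem_setOf_eq] at hω ⊢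
    linarith
  rw [hU, hm.directed_le.measure_iUnion]
  refine iSup_le fun n => ?_
  have hpos : (0:ℝ) < 1/(n+1) := by positivity
  have hnot : q - 1/(n+1) ∉ {x : ℝ | u ≤ distFun P X x} := by
    intro hmem
    have h2 := csInf_le hbdd hmem
    have h3 : q ≤ q - 1/(n+1) := h2
    linarith
  have hlt : distFun P X (q - 1/(n+1)) ≤ u := le_of_not_ge hnot
  rw [← ofReal_distFun]
  exact ENNReal.ofReal_le_ofReal hlt

end Aux

section Aux2
variable {Ω : Type*} [MeasurableSpace Ω] (P : Measure Ω) [IsProbabilityMeasure P] (X : Ω → ℝ)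
variable (hX : Measurable X)
include hX

open Set in
lemma lintegral_quantile_sub {α : ℝ} (hα : α ∈ Set.Ioo (0:ℝ) 1) :
    ∫⁻ u in Set.Ioo α 1, ENNReal.ofReal (quantile P X u - quantile P X α) =
      ∫⁻ ω, ENNReal.ofReal (max (X ω - quantile P X α) 0) ∂P := by
  set q := quantile P X α with hq
  have hsub : Set.Ioo α 1 ⊆ Set.Ioo (0:ℝ) 1 := fun u hu => ⟨lt_trans hα.1 hu.1, hu.2⟩
  have hmono : MonotoneOn (quantile P X) (Set.Ioo α 1) :=
    (quantile_monotoneOn P X hX).mono hsub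
  have hmble : AEMeasurable (fun u => quantile P X u - q) (volume.restrict (Set.Ioo α 1)) :=
    (aemeasurable_restrict_of_monotoneOn measurableSet_Ioo hmono).sub aemeasurable_const
  have hnn : 0 ≤ᵐ[volume.restrict (Set.Ioo α 1)] fun u => quantile P X u - q := by
    refine (ae_restrict_iff' measurableSet_Ioo).2 (ae_of_all _ fun u hu => ?_)
    have := quantile_monotoneOn P X hX hα (hsub hu) (le_of_lt hu.1)
    simpa [hq] using sub_nonneg.2 this
  rw [lintegral_eq_lintegral_meas_lt _ hnn hmble]
  have hgnn : 0 ≤ᵐ[P] fun ω => max (X ω - q) 0 := ae_of_all _ fun ω => le_max_right _ _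
  have hgm : AEMeasurable (fun ω => max (X ω - q) 0) P :=
    ((hX.sub measurable_const).max measurable_const).aemeasurable
  rw [lintegral_eq_lintegral_meas_lt _ hgnn hgm]
  refine setLIntegral_congr_fun measurableSet_Ioi (fun t ht => ?_)
  have ht : (0:ℝ) < t := ht
  have hFq : α ≤ distFun P X q := le_distFun_quantile P X hX hα
  have hFqt : α ≤ distFun P X (q + t) := le_trans hFq (distFun_mono P X (by linarith))
  have hFle : distFun P X (q + t) ≤ 1 := by
    rw [distFun]
    exact ENNReal.toReal_le_of_le_ofReal one_pos.le (by simpa using prob_le_one)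
  -- left side set
  have hset : {u : ℝ | t < quantile P X u - q} ∩ Set.Ioo α 1
      = Set.Ioo (distFun P X (q + t)) 1 := by
    ext u
    simp only [Set.mem_inter_iff, Set.mem_setOf_eq, Set.mem_Ioo]
    constructor
    · rintro ⟨h1, h2, h3⟩
      have hu01 : u ∈ Set.Ioo (0:ℝ) 1 := hsub ⟨h2, h3⟩
      refine ⟨?_, h3⟩
      by_contra hcon
      push_neg at hcon
      have := (quantile_le_iff P X hX hu01).2 hcon
      linarith
    · rintro ⟨h1, h2⟩
      have hαu : α < u := lt_of_le_of_lt hFqt h1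
      have hu01 : u ∈ Set.Ioo (0:ℝ) 1 := ⟨lt_trans hα.1 hαu, h2⟩
      refine ⟨?_, hαu, h2⟩
      by_contra hcon
      push_neg at hcon
      have : quantile P X u ≤ q + t := by linarith
      have := (quantile_le_iff P X hX hu01).1 this
      linarith
  rw [Measure.restrict_apply' measurableSet_Ioo, hset, Real.volume_Ioo]
  -- right side set
  have hset2 : {ω | t < max (X ω - q) 0} = {ω | X ω ≤ q + t}ᶜ := by
    ext ω
    simp only [Set.mem_setOf_eq, Set.mem_compl_iff, lt_max_iff, not_le]
    constructor
    · rintro (h | h)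
      · linarith
      · linarith
    · intro h; left; linarith
  rw [hset2, prob_compl_eq_one_sub (measurableSet_le hX measurable_const),
    ← ofReal_distFun P X (q + t)]
  rw [ENNReal.ofReal_sub _ (distFun_nonneg P X _), ENNReal.ofReal_one]

lemma lint_max_sub_lt_top (hXpos : (∫⁻ ω, ENNReal.ofReal (max (X ω) 0) ∂P) < ⊤) (c : ℝ) :
    (∫⁻ ω, ENNReal.ofReal (max (X ω - c) 0) ∂P) < ⊤ := by
  have hpt : ∀ ω, ENNReal.ofReal (max (X ω - c) 0)
      ≤ ENNReal.ofReal (max (X ω) 0) + ENNReal.ofReal |c| := by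
    intro ω
    rw [← ENNReal.ofReal_add (le_max_right _ _) (abs_nonneg c)]
    refine ENNReal.ofReal_le_ofReal ?_
    rcases le_total (X ω - c) 0 with h | h
    · rw [max_eq_right h]; positivity
    · rw [max_eq_left h]
      rcases le_total (X ω) 0 with h2 | h2
      · rw [max_eq_right h2]; cases abs_cases c <;> linarith
      · rw [max_eq_left h2]; cases abs_cases c <;> linarith
  calc ∫⁻ ω, ENNReal.ofReal (max (X ω - c) 0) ∂P
      ≤ ∫⁻ ω, (ENNReal.ofReal (max (X ω) 0) + ENNReal.ofReal |c|) ∂P := lintegral_mono hpt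
    _ = (∫⁻ ω, ENNReal.ofReal (max (X ω) 0) ∂P) + ENNReal.ofReal |c| := by
        rw [lintegral_add_right _ measurable_const, lintegral_const, measure_univ, mul_one]
    _ < ⊤ := by
        exact ENNReal.add_lt_top.2 ⟨hXpos, ENNReal.ofReal_lt_top⟩

end Aux2

private lemma max_sub_aux (x : ℝ) : max x 0 - max (-x) 0 = x := by
  rcases le_total x 0 with h | h
  · rw [max_eq_right h, max_eq_left (neg_nonneg.2 h)]; ring
  · rw [max_eq_left h, max_eq_right (neg_nonpos.2 h)]; ring

private lemma max_aux (a b : ℝ) : max a 0 + max (-b) 0 = (max (-a) 0 + max b 0) + (a - b) := by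
  linarith [max_sub_aux a, max_sub_aux b]

/-- For every `α ∈ (0,1)` and every `X` with `E[X⁺] < ∞`:
`ES_α[X] = F^←_X(α) + (1/(1-α))·E[(X - F^←_X(α))⁺] = inf_{c ∈ ℝ} (c + (1/(1-α))·E[(X-c)⁺])`. -/
theorem ES_eq_quantile_add_and_iInf {Ω : Type*} [MeasurableSpace Ω]
    (P : Measure Ω) [IsProbabilityMeasure P]
    (α : ℝ) (hα : α ∈ Set.Ioo (0:ℝ) 1) (X : Ω → ℝ) (hX : Measurable X)
    (hXpos : (∫⁻ ω, ENNReal.ofReal (max (X ω) 0) ∂P) < ⊤) :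
    ES P α X
        = ((quantile P X α : ℝ) : EReal)
          + ((1 / (1 - α) : ℝ) : EReal)
            * ((∫⁻ ω, ENNReal.ofReal (max (X ω - quantile P X α) 0) ∂P) : EReal) ∧
    ES P α X
        = ⨅ c : ℝ, (((c : ℝ) : EReal)
          + ((1 / (1 - α) : ℝ) : EReal)
            * ((∫⁻ ω, ENNReal.ofReal (max (X ω - c) 0) ∂P) : EReal)) := by
  obtain ⟨hα0, hα1⟩ := hα
  set q := quantile P X α with hq
  have h1α : (0:ℝ) < 1 - α := by linarith
  have hkpos : (0:ℝ) < 1/(1-α) := by positivity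
  have hk1 : (1/(1-α):ℝ) * (1-α) = 1 := by field_simp
  set Iq := ∫⁻ ω, ENNReal.ofReal (max (X ω - q) 0) ∂P with hIq
  have hIlt : ∀ c : ℝ, (∫⁻ ω, ENNReal.ofReal (max (X ω - c) 0) ∂P) < ⊤ :=
    lint_max_sub_lt_top P X hX hXpos
  have hIqlt : Iq < ⊤ := hIlt q
  set Ap := ∫⁻ u in Set.Ioo α 1, ENNReal.ofReal (max (quantile P X u) 0) with hAp
  set Am := ∫⁻ u in Set.Ioo α 1, ENNReal.ofReal (max (-(quantile P X u)) 0) with hAm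
  have hESeq : ES P α X = ((1/(1-α):ℝ):EReal) * ((Ap : EReal) - (Am : EReal)) := rfl
  have hsub : Set.Ioo α 1 ⊆ Set.Ioo (0:ℝ) 1 := fun u hu => ⟨lt_trans hα0 hu.1, hu.2⟩
  have hmono : MonotoneOn (quantile P X) (Set.Ioo α 1) :=
    (quantile_monotoneOn P X hX).mono hsub
  have hge : ∀ u ∈ Set.Ioo α 1, q ≤ quantile P X u := fun u hu =>
    quantile_monotoneOn P X hX ⟨hα0, hα1⟩ (hsub hu) (le_of_lt hu.1)
  have hvol : volume (Set.Ioo α 1) = ENNReal.ofReal (1-α) := by rw [Real.volume_Ioo]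
  -- pointwise identity
  have hptid : ∀ u ∈ Set.Ioo α 1,
      ENNReal.ofReal (max (quantile P X u) 0) + ENNReal.ofReal (max (-q) 0)
      = (ENNReal.ofReal (max (-(quantile P X u)) 0) + ENNReal.ofReal (max q 0))
        + ENNReal.ofReal (quantile P X u - q) := by
    intro u hu
    rw [← ENNReal.ofReal_add (le_max_right _ _) (le_max_right _ _),
      ← ENNReal.ofReal_add (le_max_right _ _) (le_max_right _ _),
      ← ENNReal.ofReal_add (add_nonneg (le_max_right _ _) (le_max_right _ _))
        (sub_nonneg.2 (hge u hu))]
    exact congrArg _ (max_aux _ _)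
  have hqam : AEMeasurable (quantile P X) (volume.restrict (Set.Ioo α 1)) :=
    aemeasurable_restrict_of_monotoneOn measurableSet_Ioo hmono
  have key : Ap + ENNReal.ofReal (max (-q) 0) * ENNReal.ofReal (1-α)
      = (Am + ENNReal.ofReal (max q 0) * ENNReal.ofReal (1-α)) + Iq := by
    have h1 : ∫⁻ u in Set.Ioo α 1,
        (ENNReal.ofReal (max (quantile P X u) 0) + ENNReal.ofReal (max (-q) 0))
        = ∫⁻ u in Set.Ioo α 1,
          ((ENNReal.ofReal (max (-(quantile P X u)) 0) + ENNReal.ofReal (max q 0))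
            + ENNReal.ofReal (quantile P X u - q)) :=
      setLIntegral_congr_fun measurableSet_Ioo hptid
    rw [lintegral_add_right _ measurable_const, lintegral_const,
      Measure.restrict_apply_univ, hvol] at h1
    rw [lintegral_add_left' (show AEMeasurable (fun u => ENNReal.ofReal (max (-(quantile P X u)) 0)
      + ENNReal.ofReal (max q 0)) (volume.restrict (Set.Ioo α 1)) from ((hqam.neg.max aemeasurable_const).ennreal_ofReal).add
      aemeasurable_const)] at h1
    rw [lintegral_add_right _ measurable_const, lintegral_const,
      Measure.restrict_apply_univ, hvol] at h1
    rw [lintegral_quantile_sub P X hX ⟨hα0, hα1⟩] at h1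
    exact h1
  have hco1 : ENNReal.ofReal (max (-q) 0) * ENNReal.ofReal (1-α)
      = ENNReal.ofReal (max (-q) 0 * (1-α)) := (ENNReal.ofReal_mul (le_max_right _ _)).symm
  have hco2 : ENNReal.ofReal (max q 0) * ENNReal.ofReal (1-α)
      = ENNReal.ofReal (max q 0 * (1-α)) := (ENNReal.ofReal_mul (le_max_right _ _)).symm
  have hAmlt : Am < ⊤ := by
    have hle : Am ≤ ENNReal.ofReal (max (-q) 0) * ENNReal.ofReal (1-α) := by
      calc Am ≤ ∫⁻ _u in Set.Ioo α 1, ENNReal.ofReal (max (-q) 0) := by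
            refine lintegral_mono_ae ((ae_restrict_iff' measurableSet_Ioo).2
              (ae_of_all _ fun u hu => ?_))
            exact ENNReal.ofReal_le_ofReal (max_le_max (neg_le_neg (hge u hu)) le_rfl)
        _ = _ := by rw [lintegral_const, Measure.restrict_apply_univ, hvol]
    exact lt_of_le_of_lt hle (by rw [hco1]; exact ENNReal.ofReal_lt_top)
  have hAplt : Ap < ⊤ := by
    calc Ap ≤ Ap + ENNReal.ofReal (max (-q) 0) * ENNReal.ofReal (1-α) := le_self_add
      _ = (Am + ENNReal.ofReal (max q 0) * ENNReal.ofReal (1-α)) + Iq := key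
      _ < ⊤ := by
          rw [hco2]
          exact ENNReal.add_lt_top.2 ⟨ENNReal.add_lt_top.2 ⟨hAmlt, ENNReal.ofReal_lt_top⟩, hIqlt⟩
  -- real-valued identity
  have keyR : Ap.toReal + (max (-q) 0)*(1-α) = (Am.toReal + (max q 0)*(1-α)) + Iq.toReal := by
    have h := congrArg ENNReal.toReal key
    rw [hco1, hco2, ENNReal.toReal_add hAplt.ne ENNReal.ofReal_ne_top,
      ENNReal.toReal_add (ENNReal.add_lt_top.2 ⟨hAmlt, ENNReal.ofReal_lt_top⟩).ne hIqlt.ne,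
      ENNReal.toReal_add hAmlt.ne ENNReal.ofReal_ne_top,
      ENNReal.toReal_ofReal (mul_nonneg (le_max_right _ _) h1α.le),
      ENNReal.toReal_ofReal (mul_nonneg (le_max_right _ _) h1α.le)] at h
    exact h
  have hmaxq : max q 0 - max (-q) 0 = q := max_sub_aux q
  have hapam : Ap.toReal - Am.toReal = (1-α)*q + Iq.toReal := by
    have hmm : (max q 0)*(1-α) - (max (-q) 0)*(1-α) = q*(1-α) := by
      rw [← sub_mul, hmaxq]
    nlinarith [keyR, hmm]
  -- ES as a real coercion
  have hApE : ((Ap : ENNReal) : EReal) = ((Ap.toReal : ℝ) : EReal) := by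
    conv_lhs => rw [← ENNReal.ofReal_toReal hAplt.ne]
    rw [EReal.coe_ennreal_ofReal, max_eq_left ENNReal.toReal_nonneg]
  have hAmE : ((Am : ENNReal) : EReal) = ((Am.toReal : ℝ) : EReal) := by
    conv_lhs => rw [← ENNReal.ofReal_toReal hAmlt.ne]
    rw [EReal.coe_ennreal_ofReal, max_eq_left ENNReal.toReal_nonneg]
  have hcoeI : ∀ c : ℝ, (((∫⁻ ω, ENNReal.ofReal (max (X ω - c) 0) ∂P) : ENNReal) : EReal)
      = (((∫⁻ ω, ENNReal.ofReal (max (X ω - c) 0) ∂P).toReal : ℝ) : EReal) := by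
    intro c
    conv_lhs => rw [← ENNReal.ofReal_toReal (hIlt c).ne]
    rw [EReal.coe_ennreal_ofReal, max_eq_left ENNReal.toReal_nonneg]
  have hESreal : ES P α X = (((1/(1-α)) * (Ap.toReal - Am.toReal) : ℝ) : EReal) := by
    rw [hESeq, hApE, hAmE, ← EReal.coe_sub, ← EReal.coe_mul]
  have hreal1 : (1/(1-α):ℝ) * (Ap.toReal - Am.toReal) = q + (1/(1-α)) * Iq.toReal := by
    rw [hapam]
    field_simp
  have part1 : ES P α X = ((q : ℝ) : EReal)
      + ((1 / (1 - α) : ℝ) : EReal) * ((Iq : ENNReal) : EReal) := by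
    rw [hESreal, hreal1, hIq, hcoeI q, ← EReal.coe_mul, ← EReal.coe_add]
  refine ⟨part1, ?_⟩
  -- the infimum part
  have hPle : ENNReal.ofReal α ≤ P {ω | X ω ≤ q} := by
    rw [← ofReal_distFun]
    exact ENNReal.ofReal_le_ofReal (le_distFun_quantile P X hX ⟨hα0, hα1⟩)
  have hPlt : P {ω | X ω < q} ≤ ENNReal.ofReal α := measure_lt_quantile P X hX ⟨hα0, hα1⟩
  have h1mα : ENNReal.ofReal (1-α) = 1 - ENNReal.ofReal α := by
    rw [ENNReal.ofReal_sub 1 hα0.le, ENNReal.ofReal_one]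
  have hmf : Measurable fun ω => ENNReal.ofReal (max (X ω - q) 0) :=
    ((hX.sub measurable_const).max measurable_const).ennreal_ofReal
  -- main inequality for g
  have hg : ∀ c : ℝ, q + (1/(1-α)) * Iq.toReal
      ≤ c + (1/(1-α)) * (∫⁻ ω, ENNReal.ofReal (max (X ω - c) 0) ∂P).toReal := by
    intro c
    set Ic := ∫⁻ ω, ENNReal.ofReal (max (X ω - c) 0) ∂P with hIc
    rcases le_total q c with hqc | hcq
    · -- q ≤ c
      have hpt : ∀ ω, ENNReal.ofReal (max (X ω - q) 0)
          ≤ ENNReal.ofReal (max (X ω - c) 0)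
            + Set.indicator {ω | q < X ω} (fun _ => ENNReal.ofReal (c - q)) ω := by
        intro ω
        by_cases hω : ω ∈ {ω | q < X ω}
        · rw [Set.indicator_of_mem hω]
          have hω' : q < X ω := hω
          rw [← ENNReal.ofReal_add (le_max_right _ _) (by linarith)]
          apply ENNReal.ofReal_le_ofReal
          rcases le_total (X ω - c) 0 with h | h
          · rw [max_eq_right h, max_eq_left (by linarith : (0:ℝ) ≤ X ω - q)]; linarith
          · rw [max_eq_left h, max_eq_left (by linarith : (0:ℝ) ≤ X ω - q)]; linarith
        · rw [Set.indicator_of_notMem hω]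
          have hω' : X ω ≤ q := not_lt.1 hω
          rw [max_eq_right (by linarith : X ω - q ≤ 0)]
          simp
      have hle1 : Iq ≤ Ic + ENNReal.ofReal (c - q) * P {ω | q < X ω} := by
        calc Iq ≤ ∫⁻ ω, (ENNReal.ofReal (max (X ω - c) 0)
            + Set.indicator {ω | q < X ω} (fun _ => ENNReal.ofReal (c - q)) ω) ∂P :=
              lintegral_mono hpt
          _ = Ic + ENNReal.ofReal (c - q) * P {ω | q < X ω} := by
              rw [lintegral_add_left (show Measurable fun ω => ENNReal.ofReal (max (X ω - c) 0) from ((hX.sub measurable_const).max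
                measurable_const).ennreal_ofReal),
                lintegral_indicator_const (measurableSet_lt measurable_const hX)]
      have hP : P {ω | q < X ω} ≤ ENNReal.ofReal (1-α) := by
        have hs : {ω | q < X ω} = {ω | X ω ≤ q}ᶜ := by ext ω; simp [not_le]
        rw [hs, prob_compl_eq_one_sub (measurableSet_le hX measurable_const), h1mα]
        exact tsub_le_tsub_left hPle 1
      have hle2 : Iq ≤ Ic + ENNReal.ofReal ((c - q) * (1-α)) := by
        refine le_trans hle1 (add_le_add_right ?_ _)
        rw [ENNReal.ofReal_mul (by linarith : (0:ℝ) ≤ c - q)]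
        exact mul_le_mul_right hP _
      have htr : Iq.toReal ≤ Ic.toReal + (c - q)*(1-α) := by
        have h := ENNReal.toReal_mono
          (ENNReal.add_lt_top.2 ⟨hIlt c, ENNReal.ofReal_lt_top⟩).ne hle2
        rwa [ENNReal.toReal_add (hIlt c).ne ENNReal.ofReal_ne_top,
          ENNReal.toReal_ofReal (mul_nonneg (by linarith) h1α.le)] at h
      have h3 := mul_le_mul_of_nonneg_left htr hkpos.le
      have h4 : (1/(1-α):ℝ)*((c-q)*(1-α)) = c - q := by
        rw [show (1/(1-α):ℝ)*((c-q)*(1-α)) = (c-q)*((1/(1-α))*(1-α)) from by ring, hk1,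
          mul_one]
      rw [mul_add] at h3
      linarith
    · -- c ≤ q
      have hpt : ∀ ω, ENNReal.ofReal (max (X ω - q) 0)
          + Set.indicator {ω | q ≤ X ω} (fun _ => ENNReal.ofReal (q - c)) ω
          ≤ ENNReal.ofReal (max (X ω - c) 0) := by
        intro ω
        by_cases hω : ω ∈ {ω | q ≤ X ω}
        · rw [Set.indicator_of_mem hω]
          have hω' : q ≤ X ω := hω
          rw [max_eq_left (by linarith : (0:ℝ) ≤ X ω - q),
            ← ENNReal.ofReal_add (by linarith) (by linarith)]
          apply ENNReal.ofReal_le_ofReal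
          rw [max_eq_left (by linarith : (0:ℝ) ≤ X ω - c)]
          linarith
        · rw [Set.indicator_of_notMem hω, add_zero]
          have hω' : X ω < q := not_le.1 hω
          exact ENNReal.ofReal_le_ofReal (max_le_max (by linarith) le_rfl)
      have hle1 : Iq + ENNReal.ofReal (q - c) * P {ω | q ≤ X ω} ≤ Ic := by
        calc Iq + ENNReal.ofReal (q - c) * P {ω | q ≤ X ω}
            = ∫⁻ ω, (ENNReal.ofReal (max (X ω - q) 0)
              + Set.indicator {ω | q ≤ X ω} (fun _ => ENNReal.ofReal (q - c)) ω) ∂P := by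
              rw [lintegral_add_left hmf,
                lintegral_indicator_const (measurableSet_le measurable_const hX)]
          _ ≤ Ic := lintegral_mono hpt
      have hP : ENNReal.ofReal (1-α) ≤ P {ω | q ≤ X ω} := by
        have hs : {ω | q ≤ X ω} = {ω | X ω < q}ᶜ := by ext ω; simp [not_lt]
        rw [hs, prob_compl_eq_one_sub (measurableSet_lt hX measurable_const), h1mα]
        exact tsub_le_tsub_left hPlt 1
      have hle2 : Iq + ENNReal.ofReal ((q - c) * (1-α)) ≤ Ic := by
        refine le_trans (add_le_add_right ?_ _) hle1
        rw [ENNReal.ofReal_mul (by linarith : (0:ℝ) ≤ q - c)]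
        exact mul_le_mul_right hP _
      have htr : Iq.toReal + (q - c)*(1-α) ≤ Ic.toReal := by
        have h := ENNReal.toReal_mono (hIlt c).ne hle2
        rwa [ENNReal.toReal_add hIqlt.ne ENNReal.ofReal_ne_top,
          ENNReal.toReal_ofReal (mul_nonneg (by linarith) h1α.le)] at h
      have h3 := mul_le_mul_of_nonneg_left htr hkpos.le
      have h4 : (1/(1-α):ℝ)*((q-c)*(1-α)) = q - c := by
        rw [show (1/(1-α):ℝ)*((q-c)*(1-α)) = (q-c)*((1/(1-α))*(1-α)) from by ring, hk1,
          mul_one]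
      rw [mul_add] at h3
      linarith
  -- conclude
  have hEc : ∀ c : ℝ, ((c : ℝ) : EReal)
      + ((1 / (1 - α) : ℝ) : EReal) * ((∫⁻ ω, ENNReal.ofReal (max (X ω - c) 0) ∂P : ENNReal) : EReal)
      = (((c + (1/(1-α)) * (∫⁻ ω, ENNReal.ofReal (max (X ω - c) 0) ∂P).toReal : ℝ)) : EReal) := by
    intro c
    rw [hcoeI c, ← EReal.coe_mul, ← EReal.coe_add]
  have hESg : ES P α X = (((q + (1/(1-α)) * Iq.toReal : ℝ)) : EReal) := by
    rw [hESreal, hreal1]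
  refine le_antisymm (le_iInf fun c => ?_) (iInf_le_of_le q ?_)
  · rw [hEc c, hESg]
    exact EReal.coe_le_coe_iff.2 (hg c)
  · rw [hEc q, hESg, ← hIq]
end

section
/- For every α ∈ [0,1), the expected shortfall at level α is subadditive: if X, Y are random variables on (Ω,𝓕,P) with E[X^+] < ∞ and E[Y^+] < ∞, then E[(X+Y)^+] < ∞ and ES_α[X+Y] ≤ ES_α[X] + ES_α[Y]. -/
open MeasureTheory

open Set Filter Topology
open scoped ENNReal

set_option linter.unusedSectionVars false
set_option linter.unusedVariables false

namespace ESAux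

lemma ofReal_max_zero (x : ℝ) : ENNReal.ofReal (max x 0) = ENNReal.ofReal x := by
  rcases le_total x 0 with h | h
  · simp [max_eq_right h, ENNReal.ofReal_of_nonpos h]
  · rw [max_eq_left h]

lemma max_zero_sub_max_neg_zero (x : ℝ) : max x 0 - max (-x) 0 = x := by
  rcases le_total 0 x with h | h
  · rw [max_eq_left h, max_eq_right (neg_nonpos.2 h), sub_zero]
  · rw [max_eq_right h, max_eq_left (neg_nonneg.2 h), zero_sub, neg_neg]

variable {Ω : Type*} [MeasurableSpace Ω] (P : Measure Ω) [IsProbabilityMeasure P] (Z : Ω → ℝ)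

lemma distFun_nonneg (x : ℝ) : 0 ≤ distFun P Z x := ENNReal.toReal_nonneg

lemma distFun_le_one (x : ℝ) : distFun P Z x ≤ 1 := by
  have h : P {ω | Z ω ≤ x} ≤ 1 := prob_le_one
  calc (P {ω | Z ω ≤ x}).toReal ≤ (1 : ℝ≥0∞).toReal :=
        ENNReal.toReal_mono ENNReal.one_ne_top h
    _ = 1 := ENNReal.toReal_one

lemma distFun_mono : Monotone (distFun P Z) := fun x y hxy =>
  ENNReal.toReal_mono (measure_ne_top P _) (measure_mono fun ω hω => le_trans hω hxy)

lemma measure_Iic' (x : ℝ) : P {ω | Z ω ≤ x} = ENNReal.ofReal (distFun P Z x) :=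
  (ENNReal.ofReal_toReal (measure_ne_top P _)).symm

variable {P Z}

lemma measurableSet_le (hZ : Measurable Z) (c : ℝ) : MeasurableSet {ω | Z ω ≤ c} :=
  hZ measurableSet_Iic

lemma exists_distFun_ge {u : ℝ} (hu : u < 1) : ∃ n : ℕ, u ≤ distFun P Z n := by
  have hmono : Monotone (fun n : ℕ => {ω | Z ω ≤ (n : ℝ)}) := by
    intro m n hmn ω hω
    simp only [mem_setOf_eq] at *
    have : (m : ℝ) ≤ n := by exact_mod_cast hmn
    linarith
  have hU : ⋃ n : ℕ, {ω | Z ω ≤ (n : ℝ)} = univ := by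
    ext ω
    simp only [mem_iUnion, mem_setOf_eq, mem_univ, iff_true]
    exact exists_nat_ge (Z ω)
  have ht := tendsto_measure_iUnion_atTop (μ := P) hmono
  rw [hU, measure_univ] at ht
  have hlt : ENNReal.ofReal u < 1 := ENNReal.ofReal_lt_one.2 hu
  have hev : ∀ᶠ n : ℕ in atTop, ENNReal.ofReal u < P {ω | Z ω ≤ (n : ℝ)} :=
    ht.eventually (eventually_gt_nhds hlt)
  obtain ⟨n, hn⟩ := hev.exists
  exact ⟨n, (ENNReal.ofReal_le_iff_le_toReal (measure_ne_top P _)).1 hn.le⟩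

lemma exists_distFun_lt (hZ : Measurable Z) {u : ℝ} (hu : 0 < u) :
    ∃ n : ℕ, distFun P Z (-(n : ℝ)) < u := by
  have hanti : Antitone (fun n : ℕ => {ω | Z ω ≤ -(n : ℝ)}) := by
    intro m n hmn ω hω
    simp only [mem_setOf_eq] at *
    have : (m : ℝ) ≤ n := by exact_mod_cast hmn
    linarith
  have hI : ⋂ n : ℕ, {ω | Z ω ≤ -(n : ℝ)} = (∅ : Set Ω) := by
    ext ω
    simp only [mem_iInter, mem_setOf_eq, mem_empty_iff_false, iff_false, not_forall]
    obtain ⟨n, hn⟩ := exists_nat_gt (-(Z ω))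
    exact ⟨n, by push_neg; linarith⟩
  have ht := tendsto_measure_iInter_atTop
    (fun n => (measurableSet_le hZ _).nullMeasurableSet) hanti ⟨0, measure_ne_top P _⟩
  rw [hI, measure_empty] at ht
  have hev : ∀ᶠ n : ℕ in atTop, P {ω | Z ω ≤ -(n : ℝ)} < ENNReal.ofReal u :=
    ht.eventually (eventually_lt_nhds (ENNReal.ofReal_pos.2 hu))
  obtain ⟨n, hn⟩ := hev.exists
  refine ⟨n, ?_⟩
  have h2 := (ENNReal.toReal_lt_toReal (measure_ne_top P _) ENNReal.ofReal_ne_top).2 hn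
  rwa [ENNReal.toReal_ofReal hu.le] at h2

lemma quantile_set_nonempty {u : ℝ} (hu : u < 1) : {x : ℝ | u ≤ distFun P Z x}.Nonempty := by
  obtain ⟨n, hn⟩ := exists_distFun_ge (P := P) (Z := Z) hu
  exact ⟨n, hn⟩

lemma quantile_set_bddBelow (hZ : Measurable Z) {u : ℝ} (hu : 0 < u) :
    BddBelow {x : ℝ | u ≤ distFun P Z x} := by
  obtain ⟨n, hn⟩ := exists_distFun_lt (P := P) hZ hu
  refine ⟨-(n : ℝ), fun y hy => ?_⟩
  by_contra h
  push_neg at h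
  exact absurd hy (not_le.2 (lt_of_le_of_lt (distFun_mono P Z h.le) hn))

lemma le_distFun_quantile (hZ : Measurable Z) {u : ℝ} (hu : u ∈ Ioo (0:ℝ) 1) :
    u ≤ distFun P Z (quantile P Z u) := by
  have hne := quantile_set_nonempty (P := P) (Z := Z) hu.2
  have hbd := quantile_set_bddBelow (P := P) hZ hu.1
  have hmem : ∀ n : ℕ, u ≤ distFun P Z (quantile P Z u + 1 / ((n : ℝ) + 1)) := by
    intro n
    have hpos : (0:ℝ) < 1 / ((n : ℝ) + 1) := by positivity
    obtain ⟨y, hyS, hy⟩ := Real.lt_sInf_add_pos hne hpos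
    exact le_trans hyS (distFun_mono P Z hy.le)
  have hxn : ∀ n : ℕ, ENNReal.ofReal u ≤ P {ω | Z ω ≤ quantile P Z u + 1 / ((n : ℝ) + 1)} := by
    intro n
    rw [measure_Iic' P Z]
    exact ENNReal.ofReal_le_ofReal (hmem n)
  have hanti : Antitone (fun n : ℕ => {ω | Z ω ≤ quantile P Z u + 1 / ((n : ℝ) + 1)}) := by
    intro m n hmn ω hω
    simp only [mem_setOf_eq] at *
    have h1 : (1 : ℝ) / ((n : ℝ) + 1) ≤ 1 / ((m : ℝ) + 1) := by
      apply one_div_le_one_div_of_le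
      · positivity
      · have : (m : ℝ) ≤ n := by exact_mod_cast hmn
        linarith
    linarith
  have hI : ⋂ n : ℕ, {ω | Z ω ≤ quantile P Z u + 1 / ((n : ℝ) + 1)}
      = {ω | Z ω ≤ quantile P Z u} := by
    ext ω
    simp only [mem_iInter, mem_setOf_eq]
    constructor
    · intro h
      refine le_of_forall_pos_le_add fun ε hε => ?_
      obtain ⟨n, hn⟩ := exists_nat_one_div_lt hε
      exact (h n).trans (by linarith)
    · intro h n
      have : (0:ℝ) < 1 / ((n : ℝ) + 1) := by positivity
      linarith
  have ht := tendsto_measure_iInter_atTop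
    (fun n => (measurableSet_le hZ _).nullMeasurableSet) hanti ⟨0, measure_ne_top P _⟩
  rw [hI] at ht
  have hle := ge_of_tendsto ht (Eventually.of_forall hxn)
  rw [measure_Iic' P Z] at hle
  exact (ENNReal.ofReal_le_ofReal_iff (distFun_nonneg P Z _)).1 hle

lemma quantile_le_iff (hZ : Measurable Z) {u : ℝ} (hu : u ∈ Ioo (0:ℝ) 1) {x : ℝ} :
    quantile P Z u ≤ x ↔ u ≤ distFun P Z x := by
  constructor
  · intro h
    exact (le_distFun_quantile hZ hu).trans (distFun_mono P Z h)
  · intro h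
    exact csInf_le (quantile_set_bddBelow hZ hu.1) h

lemma quantile_monotoneOn (hZ : Measurable Z) :
    MonotoneOn (quantile P Z) (Ioo (0:ℝ) 1) := fun u hu v hv huv =>
  (quantile_le_iff hZ hu).2 (huv.trans (le_distFun_quantile hZ hv))

open scoped Classical in
/-- A measurable version of the quantile function, vanishing outside `(0,1)`. -/
noncomputable def G (P : Measure Ω) (Z : Ω → ℝ) : ℝ → ℝ :=
  (Ioo (0:ℝ) 1).piecewise (quantile P Z) 0

lemma G_eq_on {u : ℝ} (hu : u ∈ Ioo (0:ℝ) 1) : G P Z u = quantile P Z u :=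
  Set.piecewise_eq_of_mem _ _ _ hu

lemma measurable_G (hZ : Measurable Z) : Measurable (G P Z) := by
  apply measurable_of_Iic
  intro x
  have hset : G P Z ⁻¹' Iic x =
      (Ioo (0:ℝ) 1 ∩ Iic (distFun P Z x)) ∪ ((Ioo (0:ℝ) 1)ᶜ ∩ {_u : ℝ | (0:ℝ) ≤ x}) := by
    ext u
    by_cases hu : u ∈ Ioo (0:ℝ) 1
    · simp only [mem_preimage, mem_Iic, G_eq_on hu, mem_union, mem_inter_iff, hu, true_and,
        mem_compl_iff, not_true_eq_false, false_and, or_false, mem_setOf_eq]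
      exact quantile_le_iff hZ hu
    · have : G P Z u = 0 := Set.piecewise_eq_of_notMem _ _ _ hu
      simp only [mem_preimage, mem_Iic, this, mem_union, mem_inter_iff, hu, false_and,
        mem_compl_iff, not_false_eq_true, true_and, false_or, mem_setOf_eq]
  rw [hset]
  exact ((measurableSet_Ioo.inter measurableSet_Iic).union
    (measurableSet_Ioo.compl.inter (MeasurableSet.const _)))

lemma map_G (hZ : Measurable Z) :
    Measure.map (G P Z) (volume.restrict (Ioo (0:ℝ) 1)) = Measure.map Z P := by
  have hG := measurable_G (P := P) hZ
  haveI : IsFiniteMeasure (Measure.map (G P Z) (volume.restrict (Ioo (0:ℝ) 1))) := by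
    constructor
    rw [Measure.map_apply hG MeasurableSet.univ]
    exact lt_of_le_of_lt (measure_mono (subset_univ _)) (measure_lt_top _ _)
  apply Measure.ext_of_Iic
  intro x
  rw [Measure.map_apply hG measurableSet_Iic, Measure.map_apply hZ measurableSet_Iic,
    Measure.restrict_apply (hG measurableSet_Iic)]
  have hpre : G P Z ⁻¹' Iic x ∩ Ioo 0 1 = Iic (distFun P Z x) ∩ Ioo (0:ℝ) 1 := by
    ext u
    simp only [mem_inter_iff, mem_preimage, mem_Iic, and_congr_left_iff]
    intro hu
    rw [G_eq_on hu]
    exact quantile_le_iff hZ hu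
  have hPz : P (Z ⁻¹' Iic x) = ENNReal.ofReal (distFun P Z x) := measure_Iic' P Z x
  rw [hpre, hPz]
  set c := distFun P Z x with hc
  have hc0 : 0 ≤ c := distFun_nonneg P Z x
  have hc1 : c ≤ 1 := distFun_le_one P Z x
  rcases lt_or_eq_of_le hc1 with h1 | h1
  · have hIic : Iic c ∩ Ioo (0:ℝ) 1 = Ioc 0 c := by
      ext u
      simp only [mem_inter_iff, mem_Iic, mem_Ioo, mem_Ioc]
      constructor
      · rintro ⟨h, h0, _⟩; exact ⟨h0, h⟩
      · rintro ⟨h0, h⟩; exact ⟨h, h0, lt_of_le_of_lt h h1⟩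
    rw [hIic, Real.volume_Ioc, sub_zero]
  · have hIic : Iic c ∩ Ioo (0:ℝ) 1 = Ioo 0 1 := by
      rw [inter_eq_right]
      intro u hu
      rw [mem_Iic, h1]
      exact hu.2.le
    rw [hIic, Real.volume_Ioo, h1, sub_zero]

lemma lintegral_quantile_comp (hZ : Measurable Z) {g : ℝ → ℝ≥0∞} (hg : Measurable g) :
    ∫⁻ u in Ioo (0:ℝ) 1, g (quantile P Z u) = ∫⁻ ω, g (Z ω) ∂P := by
  have h1 : ∫⁻ u in Ioo (0:ℝ) 1, g (quantile P Z u) = ∫⁻ u in Ioo (0:ℝ) 1, g (G P Z u) :=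
    setLIntegral_congr_fun measurableSet_Ioo
      (fun u hu => by rw [G_eq_on hu])
  rw [h1, ← lintegral_map hg (measurable_G hZ), map_G hZ, lintegral_map hg hZ]

lemma integral_quantile_comp (hZ : Measurable Z) {f : ℝ → ℝ} (hf : Measurable f) :
    ∫ u in Ioo (0:ℝ) 1, f (quantile P Z u) = ∫ ω, f (Z ω) ∂P := by
  have h1 : ∫ u in Ioo (0:ℝ) 1, f (quantile P Z u) = ∫ u in Ioo (0:ℝ) 1, f (G P Z u) :=
    setIntegral_congr_fun measurableSet_Ioo fun u hu => by rw [G_eq_on hu]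
  rw [h1, ← integral_map (measurable_G (P := P) hZ).aemeasurable hf.aestronglyMeasurable,
    map_G hZ, integral_map hZ.aemeasurable hf.aestronglyMeasurable]

lemma integrableOn_quantile_comp (hZ : Measurable Z) {f : ℝ → ℝ} (hf : Measurable f)
    (hint : Integrable (fun ω => f (Z ω)) P) :
    IntegrableOn (fun u => f (quantile P Z u)) (Ioo (0:ℝ) 1) volume := by
  have h2 : Integrable f (Measure.map Z P) :=
    (integrable_map_measure hf.aestronglyMeasurable hZ.aemeasurable).2 hint
  rw [← map_G hZ] at h2
  have h3 : Integrable (fun u => f (G P Z u)) (volume.restrict (Ioo (0:ℝ) 1)) :=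
    (integrable_map_measure hf.aestronglyMeasurable (measurable_G hZ).aemeasurable).1 h2
  exact h3.congr (eventuallyEq_of_mem (self_mem_ae_restrict measurableSet_Ioo)
    fun u hu => by rw [G_eq_on hu])

lemma quantile_aesm (hZ : Measurable Z) {α : ℝ} (hα : 0 ≤ α) :
    AEStronglyMeasurable (quantile P Z) (volume.restrict (Ioo α 1)) := by
  refine (measurable_G (P := P) hZ).aestronglyMeasurable.congr ?_
  exact eventuallyEq_of_mem (self_mem_ae_restrict measurableSet_Ioo)
    fun u hu => G_eq_on (Ioo_subset_Ioo hα le_rfl hu)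

lemma coe_ennreal_eq_coe_toReal {A : ℝ≥0∞} (hA : A ≠ ⊤) :
    (A : EReal) = ((A.toReal : ℝ) : EReal) := by
  conv_lhs => rw [← ENNReal.ofReal_toReal hA]
  rw [EReal.coe_ennreal_ofReal, max_eq_left ENNReal.toReal_nonneg]

lemma lintegral_pos_part_le {α : ℝ} (hα : 0 ≤ α) (hZ : Measurable Z) :
    (∫⁻ u in Ioo α 1, ENNReal.ofReal (max (quantile P Z u) 0))
      ≤ ∫⁻ ω, ENNReal.ofReal (max (Z ω) 0) ∂P := by
  calc (∫⁻ u in Ioo α 1, ENNReal.ofReal (max (quantile P Z u) 0))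
      ≤ ∫⁻ u in Ioo (0:ℝ) 1, ENNReal.ofReal (max (quantile P Z u) 0) :=
        lintegral_mono' (Measure.restrict_mono (Ioo_subset_Ioo hα le_rfl) le_rfl) le_rfl
    _ = _ := lintegral_quantile_comp hZ ((measurable_id.max measurable_const).ennreal_ofReal)

lemma lintegral_neg_part_eq (hZ : Measurable Z) :
    (∫⁻ u in Ioo (0:ℝ) 1, ENNReal.ofReal (max (-(quantile P Z u)) 0))
      = ∫⁻ ω, ENNReal.ofReal (max (-(Z ω)) 0) ∂P :=
  lintegral_quantile_comp hZ ((measurable_id.neg.max measurable_const).ennreal_ofReal)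

lemma lintegral_neg_part_lt_top {α : ℝ} (h0 : 0 < α) (h1 : α < 1) (hZ : Measurable Z) :
    (∫⁻ u in Ioo α 1, ENNReal.ofReal (max (-(quantile P Z u)) 0)) < ⊤ := by
  have hb : ∀ u ∈ Ioo α 1, ENNReal.ofReal (max (-(quantile P Z u)) 0)
      ≤ ENNReal.ofReal (max (-(quantile P Z α)) 0) := by
    intro u hu
    apply ENNReal.ofReal_le_ofReal
    have hq : quantile P Z α ≤ quantile P Z u :=
      quantile_monotoneOn hZ ⟨h0, h1⟩ ⟨lt_trans h0 hu.1, hu.2⟩ hu.1.le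
    exact max_le_max (by linarith) le_rfl
  calc (∫⁻ u in Ioo α 1, ENNReal.ofReal (max (-(quantile P Z u)) 0))
      ≤ ∫⁻ _u in Ioo α 1, ENNReal.ofReal (max (-(quantile P Z α)) 0) :=
        setLIntegral_mono measurable_const hb
    _ = ENNReal.ofReal (max (-(quantile P Z α)) 0) * volume (Ioo α 1) := setLIntegral_const _ _
    _ < ⊤ := ENNReal.mul_lt_top ENNReal.ofReal_lt_top
        (by rw [Real.volume_Ioo]; exact ENNReal.ofReal_lt_top)

lemma integrable_pos_part (hZ : Measurable Z)
    (hZpos : (∫⁻ ω, ENNReal.ofReal (max (Z ω) 0) ∂P) < ⊤) (s : ℝ) :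
    Integrable (fun ω => max (Z ω - s) 0) P := by
  have h1 : Integrable (fun ω => max (Z ω) 0) P :=
    ⟨(hZ.max measurable_const).aestronglyMeasurable,
      (hasFiniteIntegral_iff_ofReal (Eventually.of_forall fun ω => le_max_right _ _)).2 hZpos⟩
  have hb := h1.add (integrable_const |s|)
  refine Integrable.mono' hb
    ((hZ.sub measurable_const).max measurable_const).aestronglyMeasurable
    (Eventually.of_forall fun ω => ?_)
  rw [Real.norm_eq_abs, abs_of_nonneg (le_max_right _ _)]
  simp only [Pi.add_apply]
  apply max_le
  · have h2 : -|s| ≤ s := neg_abs_le s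
    have h3 : Z ω ≤ max (Z ω) 0 := le_max_left _ _
    linarith
  · positivity

lemma integrable_max_self (hZ : Measurable Z)
    (hZpos : (∫⁻ ω, ENNReal.ofReal (max (Z ω) 0) ∂P) < ⊤) :
    Integrable (fun ω => max (Z ω) 0) P :=
  ⟨(hZ.max measurable_const).aestronglyMeasurable,
    (hasFiniteIntegral_iff_ofReal (Eventually.of_forall fun ω => le_max_right _ _)).2 hZpos⟩

lemma integrable_of_parts (hZ : Measurable Z)
    (hZpos : (∫⁻ ω, ENNReal.ofReal (max (Z ω) 0) ∂P) < ⊤)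
    (hZneg : (∫⁻ ω, ENNReal.ofReal (max (-(Z ω)) 0) ∂P) < ⊤) :
    Integrable Z P := by
  have h1 := integrable_max_self hZ hZpos
  have h2 : Integrable (fun ω => max (-(Z ω)) 0) P :=
    ⟨(hZ.neg.max measurable_const).aestronglyMeasurable,
      (hasFiniteIntegral_iff_ofReal (Eventually.of_forall fun ω => le_max_right _ _)).2 hZneg⟩
  exact (h1.sub h2).congr (Eventually.of_forall fun ω => max_zero_sub_max_neg_zero _)

lemma integrableOn_quantile {α : ℝ} (hα0 : 0 ≤ α) (hZ : Measurable Z)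
    (hA : (∫⁻ u in Ioo α 1, ENNReal.ofReal (max (quantile P Z u) 0)) ≠ ⊤)
    (hB : (∫⁻ u in Ioo α 1, ENNReal.ofReal (max (-(quantile P Z u)) 0)) ≠ ⊤) :
    IntegrableOn (quantile P Z) (Ioo α 1) volume := by
  have haesm := quantile_aesm (P := P) (Z := Z) hZ hα0
  have hpos : Integrable (fun u => max (quantile P Z u) 0) (volume.restrict (Ioo α 1)) :=
    ⟨(haesm.aemeasurable.max aemeasurable_const).aestronglyMeasurable,
      (hasFiniteIntegral_iff_ofReal (Eventually.of_forall fun u => le_max_right _ _)).2 hA.lt_top⟩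
  have hneg : Integrable (fun u => max (-(quantile P Z u)) 0) (volume.restrict (Ioo α 1)) :=
    ⟨((haesm.aemeasurable.neg).max aemeasurable_const).aestronglyMeasurable,
      (hasFiniteIntegral_iff_ofReal (Eventually.of_forall fun u => le_max_right _ _)).2 hB.lt_top⟩
  exact (hpos.sub hneg).congr (Eventually.of_forall fun u => max_zero_sub_max_neg_zero _)

lemma key1 {α : ℝ} (hα : α ∈ Ico (0:ℝ) 1) (hZ : Measurable Z)
    (hZpos : (∫⁻ ω, ENNReal.ofReal (max (Z ω) 0) ∂P) < ⊤)
    (hqint : IntegrableOn (quantile P Z) (Ioo α 1) volume) (s : ℝ) :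
    ∫ u in Ioo α 1, quantile P Z u ≤ (1 - α) * s + ∫ ω, max (Z ω - s) 0 ∂P := by
  have hfm : Measurable fun x : ℝ => max (x - s) 0 :=
    (measurable_id.sub measurable_const).max measurable_const
  have hPint : Integrable (fun ω => max (Z ω - s) 0) P := integrable_pos_part hZ hZpos s
  have hfcomp0 := integrableOn_quantile_comp (P := P) hZ hfm hPint
  have hfcomp : IntegrableOn (fun u => max (quantile P Z u - s) 0) (Ioo (0:ℝ) 1) volume :=
    hfcomp0
  have hsubI : IntegrableOn (fun u => max (quantile P Z u - s) 0) (Ioo α 1) volume :=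
    hfcomp.mono_set (Ioo_subset_Ioo hα.1 le_rfl)
  have hconst : Integrable (fun _u : ℝ => s) (volume.restrict (Ioo α 1)) := integrable_const s
  calc ∫ u in Ioo α 1, quantile P Z u
      ≤ ∫ u in Ioo α 1, (s + max (quantile P Z u - s) 0) := by
        refine integral_mono hqint (hconst.add hsubI) fun u => ?_
        have h := le_max_left (quantile P Z u - s) (0:ℝ)
        simp only [Pi.add_apply]
        linarith
    _ = (1 - α) * s + ∫ u in Ioo α 1, max (quantile P Z u - s) 0 := by
        rw [integral_add hconst hsubI, setIntegral_const,
          Real.volume_real_Ioo_of_le (by linarith [hα.2] : α ≤ 1), smul_eq_mul]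
    _ ≤ (1 - α) * s + ∫ u in Ioo (0:ℝ) 1, max (quantile P Z u - s) 0 := by
        refine add_le_add le_rfl ?_
        apply setIntegral_mono_set hfcomp
        · exact Eventually.of_forall fun u => le_max_right _ _
        · exact HasSubset.Subset.eventuallyLE (Ioo_subset_Ioo hα.1 le_rfl)
    _ = (1 - α) * s + ∫ ω, max (Z ω - s) 0 ∂P := by
        rw [integral_quantile_comp hZ hfm]

lemma key2 {α : ℝ} (h0 : 0 < α) (h1 : α < 1) (hZ : Measurable Z)
    (hZpos : (∫⁻ ω, ENNReal.ofReal (max (Z ω) 0) ∂P) < ⊤)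
    (hqint : IntegrableOn (quantile P Z) (Ioo α 1) volume) :
    ∫ u in Ioo α 1, quantile P Z u
      = (1 - α) * quantile P Z α + ∫ ω, max (Z ω - quantile P Z α) 0 ∂P := by
  set s := quantile P Z α with hs
  have hαIoo : α ∈ Ioo (0:ℝ) 1 := ⟨h0, h1⟩
  have hfm : Measurable fun x : ℝ => max (x - s) 0 :=
    (measurable_id.sub measurable_const).max measurable_const
  have hPint : Integrable (fun ω => max (Z ω - s) 0) P := integrable_pos_part hZ hZpos s
  have hfcomp0 := integrableOn_quantile_comp (P := P) hZ hfm hPint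
  have hfcomp : IntegrableOn (fun u => max (quantile P Z u - s) 0) (Ioo (0:ℝ) 1) volume :=
    hfcomp0
  have hsubI : IntegrableOn (fun u => max (quantile P Z u - s) 0) (Ioo α 1) volume :=
    hfcomp.mono_set (Ioo_subset_Ioo h0.le le_rfl)
  have hconst : Integrable (fun _u : ℝ => s) (volume.restrict (Ioo α 1)) := integrable_const s
  have hstep1 : ∫ u in Ioo α 1, quantile P Z u
      = ∫ u in Ioo α 1, (s + max (quantile P Z u - s) 0) := by
    refine setIntegral_congr_fun measurableSet_Ioo fun u hu => ?_
    have hq : s ≤ quantile P Z u :=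
      quantile_monotoneOn hZ hαIoo ⟨lt_trans h0 hu.1, hu.2⟩ hu.1.le
    rw [max_eq_left (by linarith)]
    ring
  have hsplit : ∫ u in Ioo (0:ℝ) 1, max (quantile P Z u - s) 0
      = (∫ u in Ioc 0 α, max (quantile P Z u - s) 0)
        + ∫ u in Ioo α 1, max (quantile P Z u - s) 0 := by
    rw [← Ioc_union_Ioo_eq_Ioo h0.le h1]
    exact setIntegral_union ((Ioc_disjoint_Ioi le_rfl).mono le_rfl Ioo_subset_Ioi_self)
      measurableSet_Ioo
      (hfcomp.mono_set fun u hu => ⟨hu.1, lt_of_le_of_lt hu.2 h1⟩)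
      (hfcomp.mono_set (Ioo_subset_Ioo h0.le le_rfl))
  have hIoc : ∫ u in Ioc (0:ℝ) α, max (quantile P Z u - s) 0 = 0 := by
    have : ∫ u in Ioc (0:ℝ) α, max (quantile P Z u - s) 0 = ∫ _u in Ioc (0:ℝ) α, (0:ℝ) := by
      refine setIntegral_congr_fun measurableSet_Ioc fun u hu => ?_
      have hq : quantile P Z u ≤ s :=
        quantile_monotoneOn hZ ⟨hu.1, lt_of_le_of_lt hu.2 h1⟩ hαIoo hu.2
      rw [max_eq_right (by linarith)]
    rw [this, integral_zero]
  have hE : ∫ u in Ioo α 1, max (quantile P Z u - s) 0 = ∫ ω, max (Z ω - s) 0 ∂P := by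
    have htr := integral_quantile_comp (P := P) hZ hfm
    rw [hsplit, hIoc, zero_add] at htr
    exact htr
  rw [hstep1, integral_add hconst hsubI, setIntegral_const,
    Real.volume_real_Ioo_of_le (by linarith : α ≤ 1), smul_eq_mul, hE]

lemma ES_eq_real {α : ℝ} (hα : α ∈ Ico (0:ℝ) 1)
    (hA : (∫⁻ u in Ioo α 1, ENNReal.ofReal (max (quantile P Z u) 0)) ≠ ⊤)
    (hB : (∫⁻ u in Ioo α 1, ENNReal.ofReal (max (-(quantile P Z u)) 0)) ≠ ⊤)
    (hqint : IntegrableOn (quantile P Z) (Ioo α 1) volume) :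
    ES P α Z = (((1 / (1 - α)) * ∫ u in Ioo α 1, quantile P Z u : ℝ) : EReal) := by
  have hint := integral_eq_lintegral_pos_part_sub_lintegral_neg_part hqint
  have eA : (∫⁻ u in Ioo α 1, ENNReal.ofReal (quantile P Z u))
      = ∫⁻ u in Ioo α 1, ENNReal.ofReal (max (quantile P Z u) 0) :=
    lintegral_congr fun u => (ofReal_max_zero _).symm
  have eB : (∫⁻ u in Ioo α 1, ENNReal.ofReal (-(quantile P Z u)))
      = ∫⁻ u in Ioo α 1, ENNReal.ofReal (max (-(quantile P Z u)) 0) :=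
    lintegral_congr fun u => (ofReal_max_zero _).symm
  rw [eA, eB] at hint
  unfold ES
  rw [coe_ennreal_eq_coe_toReal hA, coe_ennreal_eq_coe_toReal hB, ← EReal.coe_sub,
    ← EReal.coe_mul, hint]

lemma ES_bot {α : ℝ} (h1 : α < 1)
    (hB : (∫⁻ u in Ioo α 1, ENNReal.ofReal (max (-(quantile P Z u)) 0)) = ⊤) :
    ES P α Z = ⊥ := by
  unfold ES
  rw [hB, EReal.coe_ennreal_top, EReal.sub_top]
  apply EReal.mul_bot_of_pos
  apply EReal.coe_pos.2
  have h2 : (0:ℝ) < 1 - α := by linarith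
  positivity

end ESAux


open ESAux in
/-- For every `α ∈ [0,1)`, expected shortfall at level `α` is subadditive: if
`E[X⁺] < ∞` and `E[Y⁺] < ∞`, then `E[(X+Y)⁺] < ∞` and `ES_α[X+Y] ≤ ES_α[X] + ES_α[Y]`. -/
theorem ES_subadditive {Ω : Type*} [MeasurableSpace Ω]
    (P : Measure Ω) [IsProbabilityMeasure P]
    (α : ℝ) (hα : α ∈ Set.Ico (0:ℝ) 1) (X Y : Ω → ℝ)
    (hX : Measurable X) (hY : Measurable Y)
    (hXpos : (∫⁻ ω, ENNReal.ofReal (max (X ω) 0) ∂P) < ⊤)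
    (hYpos : (∫⁻ ω, ENNReal.ofReal (max (Y ω) 0) ∂P) < ⊤) :
    (∫⁻ ω, ENNReal.ofReal (max (X ω + Y ω) 0) ∂P) < ⊤ ∧
      ES P α (fun ω => X ω + Y ω) ≤ ES P α X + ES P α Y := by
  obtain ⟨hα0, hα1⟩ := hα
  have hXYm : Measurable fun ω => X ω + Y ω := hX.add hY
  have hsum : (∫⁻ ω, ENNReal.ofReal (max (X ω + Y ω) 0) ∂P) < ⊤ := by
    have hpt : ∀ ω, ENNReal.ofReal (max (X ω + Y ω) 0)
        ≤ ENNReal.ofReal (max (X ω) 0) + ENNReal.ofReal (max (Y ω) 0) := by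
      intro ω
      refine le_trans (ENNReal.ofReal_le_ofReal ?_) ENNReal.ofReal_add_le
      apply max_le
      · exact add_le_add (le_max_left _ _) (le_max_left _ _)
      · positivity
    calc (∫⁻ ω, ENNReal.ofReal (max (X ω + Y ω) 0) ∂P)
        ≤ ∫⁻ ω, (ENNReal.ofReal (max (X ω) 0) + ENNReal.ofReal (max (Y ω) 0)) ∂P :=
          lintegral_mono hpt
      _ = (∫⁻ ω, ENNReal.ofReal (max (X ω) 0) ∂P) + ∫⁻ ω, ENNReal.ofReal (max (Y ω) 0) ∂P :=
          lintegral_add_left ((hX.max measurable_const).ennreal_ofReal) _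
      _ < ⊤ := ENNReal.add_lt_top.2 ⟨hXpos, hYpos⟩
  refine ⟨hsum, ?_⟩
  have hAx : (∫⁻ u in Set.Ioo α 1, ENNReal.ofReal (max (quantile P X u) 0)) ≠ ⊤ :=
    (lt_of_le_of_lt (lintegral_pos_part_le hα0 hX) hXpos).ne
  have hAy : (∫⁻ u in Set.Ioo α 1, ENNReal.ofReal (max (quantile P Y u) 0)) ≠ ⊤ :=
    (lt_of_le_of_lt (lintegral_pos_part_le hα0 hY) hYpos).ne
  have hAxy : (∫⁻ u in Set.Ioo α 1,
      ENNReal.ofReal (max (quantile P (fun ω => X ω + Y ω) u) 0)) ≠ ⊤ :=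
    (lt_of_le_of_lt (lintegral_pos_part_le hα0 hXYm) hsum).ne
  by_cases hBxy : (∫⁻ u in Set.Ioo α 1,
      ENNReal.ofReal (max (-(quantile P (fun ω => X ω + Y ω) u)) 0)) = ⊤
  · rw [ES_bot hα1 hBxy]
    exact bot_le
  · have main : ∀ (_hBx : (∫⁻ u in Set.Ioo α 1,
          ENNReal.ofReal (max (-(quantile P X u)) 0)) ≠ ⊤)
        (_hBy : (∫⁻ u in Set.Ioo α 1, ENNReal.ofReal (max (-(quantile P Y u)) 0)) ≠ ⊤),
        ((∫ u in Set.Ioo α 1, quantile P (fun ω => X ω + Y ω) u)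
          ≤ (∫ u in Set.Ioo α 1, quantile P X u) + (∫ u in Set.Ioo α 1, quantile P Y u)) →
        ES P α (fun ω => X ω + Y ω) ≤ ES P α X + ES P α Y := by
      intro hBx hBy hI
      rw [ES_eq_real ⟨hα0, hα1⟩ hAxy hBxy (integrableOn_quantile hα0 hXYm hAxy hBxy),
        ES_eq_real ⟨hα0, hα1⟩ hAx hBx (integrableOn_quantile hα0 hX hAx hBx),
        ES_eq_real ⟨hα0, hα1⟩ hAy hBy (integrableOn_quantile hα0 hY hAy hBy),
        ← EReal.coe_add]
      apply EReal.coe_le_coe_iff.2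
      have hc : (0:ℝ) ≤ 1 / (1 - α) := by
        have h2 : (0:ℝ) < 1 - α := by linarith
        positivity
      calc (1 / (1 - α)) * ∫ u in Set.Ioo α 1, quantile P (fun ω => X ω + Y ω) u
          ≤ (1 / (1 - α)) * ((∫ u in Set.Ioo α 1, quantile P X u)
              + ∫ u in Set.Ioo α 1, quantile P Y u) := mul_le_mul_of_nonneg_left hI hc
        _ = _ := mul_add _ _ _
    rcases lt_or_eq_of_le hα0 with h0 | h0
    · -- case 0 < α
      have hBx := (lintegral_neg_part_lt_top (P := P) h0 hα1 hX).ne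
      have hBy := (lintegral_neg_part_lt_top (P := P) h0 hα1 hY).ne
      refine main hBx hBy ?_
      have hqx := integrableOn_quantile hα0 hX hAx hBx
      have hqy := integrableOn_quantile hα0 hY hAy hBy
      have hqxy := integrableOn_quantile hα0 hXYm hAxy hBxy
      have k2x := key2 h0 hα1 hX hXpos hqx
      have k2y := key2 h0 hα1 hY hYpos hqy
      have k1 := key1 ⟨hα0, hα1⟩ hXYm hsum hqxy (quantile P X α + quantile P Y α)
      have k3 : (∫ ω, max (X ω + Y ω - (quantile P X α + quantile P Y α)) 0 ∂P)
          ≤ (∫ ω, max (X ω - quantile P X α) 0 ∂P)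
            + ∫ ω, max (Y ω - quantile P Y α) 0 ∂P := by
        have hix := integrable_pos_part hX hXpos (quantile P X α)
        have hiy := integrable_pos_part hY hYpos (quantile P Y α)
        have hixy := integrable_pos_part hXYm hsum (quantile P X α + quantile P Y α)
        calc (∫ ω, max (X ω + Y ω - (quantile P X α + quantile P Y α)) 0 ∂P)
            ≤ ∫ ω, (max (X ω - quantile P X α) 0 + max (Y ω - quantile P Y α) 0) ∂P := by
              refine integral_mono hixy (hix.add hiy) fun ω => ?_
              simp only [Pi.add_apply]
              apply max_le
              · have t1 := le_max_left (X ω - quantile P X α) (0:ℝ)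
                have t2 := le_max_left (Y ω - quantile P Y α) (0:ℝ)
                linarith
              · positivity
          _ = _ := integral_add hix hiy
      have hexp : (1 - α) * (quantile P X α + quantile P Y α)
          = (1 - α) * quantile P X α + (1 - α) * quantile P Y α := by ring
      linarith
    · -- case α = 0
      subst h0
      have heq := lintegral_neg_part_eq (P := P) hXYm
      have hBxy' : (∫⁻ ω, ENNReal.ofReal (max (-(X ω + Y ω)) 0) ∂P) ≠ ⊤ := by
        rw [← heq]
        exact hBxy
      have hnegX : (∫⁻ ω, ENNReal.ofReal (max (-(X ω)) 0) ∂P) < ⊤ := by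
        have hpt : ∀ ω, ENNReal.ofReal (max (-(X ω)) 0)
            ≤ ENNReal.ofReal (max (-(X ω + Y ω)) 0) + ENNReal.ofReal (max (Y ω) 0) := by
          intro ω
          refine le_trans (ENNReal.ofReal_le_ofReal ?_) ENNReal.ofReal_add_le
          apply max_le
          · have t1 := le_max_left (-(X ω + Y ω)) (0:ℝ)
            have t2 := le_max_left (Y ω) (0:ℝ)
            linarith
          · positivity
        calc (∫⁻ ω, ENNReal.ofReal (max (-(X ω)) 0) ∂P)
            ≤ ∫⁻ ω, (ENNReal.ofReal (max (-(X ω + Y ω)) 0)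
                + ENNReal.ofReal (max (Y ω) 0)) ∂P := lintegral_mono hpt
          _ = (∫⁻ ω, ENNReal.ofReal (max (-(X ω + Y ω)) 0) ∂P)
              + ∫⁻ ω, ENNReal.ofReal (max (Y ω) 0) ∂P :=
            lintegral_add_left ((hXYm.neg.max measurable_const).ennreal_ofReal) _
          _ < ⊤ := ENNReal.add_lt_top.2 ⟨hBxy'.lt_top, hYpos⟩
      have hnegY : (∫⁻ ω, ENNReal.ofReal (max (-(Y ω)) 0) ∂P) < ⊤ := by
        have hpt : ∀ ω, ENNReal.ofReal (max (-(Y ω)) 0)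
            ≤ ENNReal.ofReal (max (-(X ω + Y ω)) 0) + ENNReal.ofReal (max (X ω) 0) := by
          intro ω
          refine le_trans (ENNReal.ofReal_le_ofReal ?_) ENNReal.ofReal_add_le
          apply max_le
          · have t1 := le_max_left (-(X ω + Y ω)) (0:ℝ)
            have t2 := le_max_left (X ω) (0:ℝ)
            linarith
          · positivity
        calc (∫⁻ ω, ENNReal.ofReal (max (-(Y ω)) 0) ∂P)
            ≤ ∫⁻ ω, (ENNReal.ofReal (max (-(X ω + Y ω)) 0)
                + ENNReal.ofReal (max (X ω) 0)) ∂P := lintegral_mono hpt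
          _ = (∫⁻ ω, ENNReal.ofReal (max (-(X ω + Y ω)) 0) ∂P)
              + ∫⁻ ω, ENNReal.ofReal (max (X ω) 0) ∂P :=
            lintegral_add_left ((hXYm.neg.max measurable_const).ennreal_ofReal) _
          _ < ⊤ := ENNReal.add_lt_top.2 ⟨hBxy'.lt_top, hXpos⟩
      have hBx : (∫⁻ u in Set.Ioo (0:ℝ) 1,
          ENNReal.ofReal (max (-(quantile P X u)) 0)) ≠ ⊤ := by
        rw [lintegral_neg_part_eq (P := P) hX]
        exact hnegX.ne
      have hBy : (∫⁻ u in Set.Ioo (0:ℝ) 1,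
          ENNReal.ofReal (max (-(quantile P Y u)) 0)) ≠ ⊤ := by
        rw [lintegral_neg_part_eq (P := P) hY]
        exact hnegY.ne
      refine main hBx hBy ?_
      have hXint : Integrable X P := integrable_of_parts hX hXpos hnegX
      have hYint : Integrable Y P := integrable_of_parts hY hYpos hnegY
      have ex : ∫ u in Set.Ioo (0:ℝ) 1, quantile P X u = ∫ ω, X ω ∂P :=
        integral_quantile_comp hX measurable_id'
      have ey : ∫ u in Set.Ioo (0:ℝ) 1, quantile P Y u = ∫ ω, Y ω ∂P :=
        integral_quantile_comp hY measurable_id'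
      have exy : ∫ u in Set.Ioo (0:ℝ) 1, quantile P (fun ω => X ω + Y ω) u
          = ∫ ω, (X ω + Y ω) ∂P :=
        integral_quantile_comp hXYm measurable_id'
      rw [ex, ey, exy, integral_add hXint hYint]
end
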